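/- arXiv:0811.3365 — 6 statements merged into one kernel-verified Lean document; each statement's English description precedes it below -/
import Mathlib

section
/- For every compactly supported continuous function φ : ℝ → ℝ, the limit as n → ∞ of (1/n) · ∫_ℝ (d²/dx²) [log(∑_{j=0}^n e^{jx})] · φ(x) dx equals φ(0). -/
open MeasureTheory Filter Finset Real


noncomputable def Saux (n : ℕ) (x : ℝ) : ℝ := ∑ j ∈ Finset.range (n + 1), Real.exp (j * x)
noncomputable def Taux (n : ℕ) (x : ℝ) : ℝ := ∑ j ∈ Finset.range (n + 1), (j : ℝ) * Real.exp (j * x)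
noncomputable def Uaux (n : ℕ) (x : ℝ) : ℝ := ∑ j ∈ Finset.range (n + 1), (j : ℝ) ^ 2 * Real.exp (j * x)
noncomputable def Gaux (n : ℕ) (x : ℝ) : ℝ := Taux n x / Saux n x
noncomputable def kaux (n : ℕ) (x : ℝ) : ℝ :=
  (Uaux n x * Saux n x - Taux n x ^ 2) / Saux n x ^ 2

lemma Saux_pos (n : ℕ) (x : ℝ) : 0 < Saux n x :=
  Finset.sum_pos (fun j _ => Real.exp_pos _) (by simp)

lemma Taux_nonneg (n : ℕ) (x : ℝ) : 0 ≤ Taux n x :=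
  Finset.sum_nonneg fun j _ => by positivity

lemma hasDerivAt_Saux (n : ℕ) (x : ℝ) : HasDerivAt (Saux n) (Taux n x) x := by
  apply HasDerivAt.fun_sum
  intro j _
  simpa [mul_comm] using ((hasDerivAt_id x).const_mul (j : ℝ)).exp

lemma hasDerivAt_Taux (n : ℕ) (x : ℝ) : HasDerivAt (Taux n) (Uaux n x) x := by
  apply HasDerivAt.fun_sum
  intro j _
  have h := (((hasDerivAt_id x).const_mul (j : ℝ)).exp).const_mul (j : ℝ)
  simp only [id] at h
  rw [show (j : ℝ) ^ 2 * Real.exp (j * x) = j * (Real.exp (j * x) * (j * 1)) by ring]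
  exact h

lemma continuous_Saux (n : ℕ) : Continuous (Saux n) := by
  unfold Saux; fun_prop

lemma continuous_Taux (n : ℕ) : Continuous (Taux n) := by
  unfold Taux; fun_prop

lemma continuous_Uaux (n : ℕ) : Continuous (Uaux n) := by
  unfold Uaux; fun_prop

lemma continuous_kaux (n : ℕ) : Continuous (kaux n) := by
  apply Continuous.div
    (((continuous_Uaux n).mul (continuous_Saux n)).sub ((continuous_Taux n).pow 2))
    ((continuous_Saux n).pow 2)
  intro x
  exact pow_ne_zero _ (Saux_pos n x).ne'

lemma hasDerivAt_Gaux (n : ℕ) (x : ℝ) : HasDerivAt (Gaux n) (kaux n x) x := by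
  have h := (hasDerivAt_Taux n x).div (hasDerivAt_Saux n x) (Saux_pos n x).ne'
  rw [show kaux n x = (Uaux n x * Saux n x - Taux n x * Taux n x) / Saux n x ^ 2 by
    unfold kaux; ring]
  exact h

lemma deriv_log_Saux (n : ℕ) :
    deriv (fun y : ℝ => Real.log (∑ j ∈ Finset.range (n + 1), Real.exp (j * y))) = Gaux n := by
  funext x
  have h := ((hasDerivAt_Saux n x).log (Saux_pos n x).ne')
  exact h.deriv

lemma deriv_Gaux (n : ℕ) : deriv (Gaux n) = kaux n :=
  funext fun x => (hasDerivAt_Gaux n x).deriv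

lemma kaux_nonneg (n : ℕ) (x : ℝ) : 0 ≤ kaux n x := by
  apply div_nonneg _ (sq_nonneg _)
  rw [sub_nonneg]
  have h := Finset.sum_mul_sq_le_sq_mul_sq (Finset.range (n + 1))
    (fun j => Real.exp ((j : ℝ) * x / 2)) (fun j => (j : ℝ) * Real.exp ((j : ℝ) * x / 2))
  have e1 : ∀ j : ℕ, Real.exp ((j : ℝ) * x / 2) * ((j : ℝ) * Real.exp ((j : ℝ) * x / 2))
      = (j : ℝ) * Real.exp ((j : ℝ) * x) := by
    intro j
    rw [show (j : ℝ) * x = (j : ℝ) * x / 2 + (j : ℝ) * x / 2 by ring, Real.exp_add]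
    ring
  have e2 : ∀ j : ℕ, Real.exp ((j : ℝ) * x / 2) ^ 2 = Real.exp ((j : ℝ) * x) := by
    intro j
    rw [sq, ← Real.exp_add]
    norm_num
  have e3 : ∀ j : ℕ, ((j : ℝ) * Real.exp ((j : ℝ) * x / 2)) ^ 2
      = (j : ℝ) ^ 2 * Real.exp ((j : ℝ) * x) := by
    intro j
    rw [mul_pow, e2]
  simp only [e1, e2, e3] at h
  calc Taux n x ^ 2 ≤ Saux n x * Uaux n x := by
        simpa [Taux, Saux, Uaux] using h
    _ = Uaux n x * Saux n x := mul_comm _ _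

lemma geom_sum_bound {r : ℝ} (hr0 : 0 ≤ r) (hr1 : r < 1) (m : ℕ) :
    ∑ j ∈ Finset.range m, (j : ℝ) * r ^ j ≤ r / (1 - r) ^ 2 := by
  exact sum_le_hasSum _ (fun j _ => by positivity)
    (hasSum_coe_mul_geometric_of_norm_lt_one (by rwa [Real.norm_eq_abs, abs_of_nonneg hr0]))

lemma Gaux_nonneg (n : ℕ) (x : ℝ) : 0 ≤ Gaux n x :=
  div_nonneg (Taux_nonneg n x) (Saux_pos n x).le

lemma Gaux_le (n : ℕ) (x : ℝ) : Gaux n x ≤ n := by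
  rw [Gaux, div_le_iff₀ (Saux_pos n x)]
  unfold Taux Saux
  rw [Finset.mul_sum]
  apply Finset.sum_le_sum
  intro j hj
  have hjn : (j : ℝ) ≤ n := by
    exact_mod_cast Nat.lt_succ_iff.mp (Finset.mem_range.mp hj)
  have := Real.exp_pos ((j : ℝ) * x)
  nlinarith

lemma Gaux_le_of_neg (n : ℕ) {x : ℝ} (hx : x < 0) :
    Gaux n x ≤ Real.exp x / (1 - Real.exp x) ^ 2 := by
  have hS1 : (1 : ℝ) ≤ Saux n x := by
    have := Finset.single_le_sum (f := fun j : ℕ => Real.exp ((j : ℝ) * x))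
      (fun j _ => (Real.exp_pos _).le) (Finset.mem_range.mpr (Nat.succ_pos n))
    simpa [Saux] using this
  have hT : Taux n x ≤ Real.exp x / (1 - Real.exp x) ^ 2 := by
    have : Taux n x = ∑ j ∈ Finset.range (n + 1), (j : ℝ) * Real.exp x ^ j := by
      unfold Taux
      refine Finset.sum_congr rfl fun j _ => ?_
      rw [← Real.exp_nat_mul]
    rw [this]
    exact geom_sum_bound (Real.exp_pos x).le
      (by simpa using Real.exp_lt_one_iff.mpr hx) _
  calc Gaux n x ≤ Taux n x :=
        div_le_self (Taux_nonneg n x) hS1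
    _ ≤ _ := hT

lemma Gaux_ge_of_pos (n : ℕ) {x : ℝ} (hx : 0 < x) :
    (n : ℝ) - Real.exp (-x) / (1 - Real.exp (-x)) ^ 2 ≤ Gaux n x := by
  set C : ℝ := Real.exp (-x) / (1 - Real.exp (-x)) ^ 2 with hC
  have hr1 : Real.exp (-x) < 1 := Real.exp_lt_one_iff.mpr (by linarith)
  have hCpos : 0 ≤ C := by
    apply div_nonneg (Real.exp_pos _).le (sq_nonneg _)
  have hkey : (n : ℝ) * Saux n x - Taux n x ≤ C * Saux n x := by
    have h1 : (n : ℝ) * Saux n x - Taux n x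
        = ∑ j ∈ Finset.range (n + 1), ((n : ℝ) - j) * Real.exp ((j : ℝ) * x) := by
      unfold Saux Taux
      rw [Finset.mul_sum, ← Finset.sum_sub_distrib]
      exact Finset.sum_congr rfl fun j _ => by ring
    have h2 : ∑ j ∈ Finset.range (n + 1), ((n : ℝ) - j) * Real.exp ((j : ℝ) * x)
        = ∑ j ∈ Finset.range (n + 1), (j : ℝ) * Real.exp (((n - j : ℕ) : ℝ) * x) := by
      rw [← Finset.sum_range_reflect]
      refine Finset.sum_congr rfl fun j hj => ?_
      have hjn : j ≤ n := Nat.lt_succ_iff.mp (Finset.mem_range.mp hj)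
      have hc : ((n - j : ℕ) : ℝ) = (n : ℝ) - j := by
        push_cast [Nat.cast_sub hjn]; ring
      simp only [Nat.add_sub_cancel]
      rw [hc]
      ring
    have h3 : ∑ j ∈ Finset.range (n + 1), (j : ℝ) * Real.exp (((n - j : ℕ) : ℝ) * x)
        ≤ Real.exp ((n : ℝ) * x) * C := by
      have : ∀ j ∈ Finset.range (n + 1), (j : ℝ) * Real.exp (((n - j : ℕ) : ℝ) * x)
          = Real.exp ((n : ℝ) * x) * ((j : ℝ) * Real.exp (-x) ^ j) := by
        intro j hj
        have hjn : j ≤ n := Nat.lt_succ_iff.mp (Finset.mem_range.mp hj)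
        have hc : ((n - j : ℕ) : ℝ) = (n : ℝ) - j := by
          push_cast [Nat.cast_sub hjn]; ring
        rw [hc, ← Real.exp_nat_mul,
          show ((n : ℝ) - j) * x = (n : ℝ) * x + (j : ℝ) * (-x) by ring, Real.exp_add]
        ring
      rw [Finset.sum_congr rfl this, ← Finset.mul_sum]
      exact mul_le_mul_of_nonneg_left
        (geom_sum_bound (Real.exp_pos _).le hr1 _) (Real.exp_pos _).le
    have h4 : Real.exp ((n : ℝ) * x) ≤ Saux n x := by
      have := Finset.single_le_sum (f := fun j : ℕ => Real.exp ((j : ℝ) * x))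
        (fun j _ => (Real.exp_pos _).le) (Finset.mem_range.mpr (Nat.lt_succ_self n))
      simpa [Saux] using this
    calc (n : ℝ) * Saux n x - Taux n x ≤ Real.exp ((n : ℝ) * x) * C := by
          rw [h1, h2]; exact h3
      _ ≤ Saux n x * C := mul_le_mul_of_nonneg_right h4 hCpos
      _ = C * Saux n x := mul_comm _ _
  have hS := Saux_pos n x
  rw [Gaux, le_div_iff₀ hS]
  nlinarith

lemma intervalIntegral_kaux (n : ℕ) (a b : ℝ) :
    ∫ x in a..b, kaux n x = Gaux n b - Gaux n a :=
  intervalIntegral.integral_eq_sub_of_hasDerivAt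
    (fun x _ => hasDerivAt_Gaux n x)
    ((continuous_kaux n).intervalIntegrable a b)

lemma abs_intervalIntegral_kaux_mul_le (n : ℕ) {a b : ℝ} (hab : a ≤ b) {ψ : ℝ → ℝ}
    (hψ : Continuous ψ) {c : ℝ} (hc : 0 ≤ c) (hbd : ∀ x ∈ Set.Icc a b, |ψ x| ≤ c) :
    |∫ x in a..b, kaux n x * ψ x| ≤ c * (Gaux n b - Gaux n a) := by
  have hint1 : IntervalIntegrable (fun x => kaux n x * ψ x) volume a b :=
    ((continuous_kaux n).mul hψ).intervalIntegrable a b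
  calc |∫ x in a..b, kaux n x * ψ x|
      ≤ ∫ x in a..b, |kaux n x * ψ x| :=
        intervalIntegral.abs_integral_le_integral_abs hab
    _ ≤ ∫ x in a..b, c * kaux n x := by
        apply intervalIntegral.integral_mono_on hab hint1.abs
          ((continuous_const.mul (continuous_kaux n)).intervalIntegrable a b)
        intro x hx
        rw [abs_mul, abs_of_nonneg (kaux_nonneg n x)]
        calc kaux n x * |ψ x| ≤ kaux n x * c :=
              mul_le_mul_of_nonneg_left (hbd x hx) (kaux_nonneg n x)
          _ = c * kaux n x := mul_comm _ _
    _ = c * (Gaux n b - Gaux n a) := by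
        rw [intervalIntegral.integral_const_mul, intervalIntegral_kaux]

set_option maxHeartbeats 1000000 in
/-- For every compactly supported continuous function `φ : ℝ → ℝ`, the limit as `n → ∞` of
`(1/n) · ∫_ℝ (d²/dx²)[log (∑_{j=0}^n e^{jx})] · φ(x) dx` equals `φ 0`. -/
theorem tendsto_integral_second_deriv_log_sum_exp_mul
    (φ : ℝ → ℝ) (hφc : Continuous φ) (hφs : HasCompactSupport φ) :
    Tendsto
      (fun n : ℕ =>
        (1 / (n : ℝ)) *
          ∫ x : ℝ,
            (deriv (deriv (fun y : ℝ =>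
              Real.log (∑ j ∈ Finset.range (n + 1), Real.exp (j * y)))) x) * φ x)
      atTop (nhds (φ 0)) := by
  have hker : ∀ (n : ℕ) (x : ℝ),
      deriv (deriv (fun y : ℝ =>
        Real.log (∑ j ∈ Finset.range (n + 1), Real.exp (j * y)))) x = kaux n x := by
    intro n x
    rw [deriv_log_Saux n, deriv_Gaux n]
  simp only [hker]
  -- bound on φ
  obtain ⟨M, hM⟩ := hφs.exists_bound_of_continuous hφc
  have hM0 : 0 ≤ M := le_trans (norm_nonneg _) (hM 0)
  have hMabs : ∀ x, |φ x| ≤ M := fun x => hM x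
  -- support radius
  obtain ⟨A0, hA0⟩ := hφs.isBounded.subset_closedBall 0
  set A : ℝ := max A0 0 + 1 with hAdef
  have hA1 : (1 : ℝ) ≤ A := by
    rw [hAdef]; linarith [le_max_right A0 (0 : ℝ)]
  have hφzero : ∀ x, x ∉ Set.Ioc (-A) A → φ x = 0 := by
    intro x hx
    apply image_eq_zero_of_notMem_tsupport
    intro hmem
    have := hA0 hmem
    rw [Real.closedBall_eq_Icc] at this
    obtain ⟨h1, h2⟩ := this
    have hA0le : A0 ≤ max A0 0 := le_max_left _ _
    apply hx
    rw [hAdef] at *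
    constructor
    · linarith
    · linarith
  have hint_eq : ∀ n : ℕ, (∫ x : ℝ, kaux n x * φ x)
      = ∫ x in (-A)..A, kaux n x * φ x := by
    intro n
    symm
    apply intervalIntegral.integral_eq_integral_of_support_subset
    intro x hx
    by_contra hxmem
    exact hx (by simp [hφzero x hxmem])
  simp only [hint_eq]
  -- the epsilon argument
  rw [Metric.tendsto_atTop]
  intro ε hε
  obtain ⟨δ0, hδ0pos, hδ0⟩ := Metric.continuousAt_iff.mp hφc.continuousAt (ε / 4) (by positivity)
  set δ : ℝ := min (δ0 / 2) 1 with hδdef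
  have hδpos : 0 < δ := lt_min (by linarith) one_pos
  have hδA : δ ≤ A := le_trans (min_le_right _ _) hA1
  have hφδ : ∀ x ∈ Set.Icc (-δ) δ, |φ x - φ 0| ≤ ε / 4 := by
    intro x hx
    have hxd : dist x 0 < δ0 := by
      rw [Real.dist_eq, sub_zero]
      have : |x| ≤ δ := abs_le.mpr ⟨hx.1, hx.2⟩
      calc |x| ≤ δ := this
        _ ≤ δ0 / 2 := min_le_left _ _
        _ < δ0 := by linarith
    have := hδ0 hxd
    rw [Real.dist_eq] at this
    linarith [le_of_lt this]
  set C : ℝ := Real.exp (-δ) / (1 - Real.exp (-δ)) ^ 2 with hCdef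
  have hC0 : 0 ≤ C := div_nonneg (Real.exp_pos _).le (sq_nonneg _)
  obtain ⟨N0, hN0⟩ := exists_nat_gt ((2 * M * C + 2 * |φ 0| * C) / (ε / 4))
  refine ⟨max N0 1, fun n hn => ?_⟩
  have hn1 : 1 ≤ n := le_trans (le_max_right _ _) hn
  have hnN0 : N0 ≤ n := le_trans (le_max_left _ _) hn
  have hnpos : (0 : ℝ) < n := by exact_mod_cast hn1
  -- Gaux values
  set g1 : ℝ := Gaux n (-A) with hg1
  set g2 : ℝ := Gaux n (-δ) with hg2
  set g3 : ℝ := Gaux n δ with hg3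
  set g4 : ℝ := Gaux n A with hg4
  have hg1nn : 0 ≤ g1 := Gaux_nonneg n _
  have hg2nn : 0 ≤ g2 := Gaux_nonneg n _
  have hg2C : g2 ≤ C := Gaux_le_of_neg n (show -δ < 0 by linarith)
  have hg3le : g3 ≤ n := Gaux_le n _
  have hg3ge : (n : ℝ) - C ≤ g3 := Gaux_ge_of_pos n hδpos
  have hg4le : g4 ≤ n := Gaux_le n _
  have hg12 : g1 ≤ g2 := by
    have h := intervalIntegral.integral_nonneg (μ := volume) (f := kaux n)
      (by linarith : -A ≤ -δ) (fun u _ => kaux_nonneg n u)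
    rw [intervalIntegral_kaux] at h
    linarith
  have hg23 : g2 ≤ g3 := by
    have h := intervalIntegral.integral_nonneg (μ := volume) (f := kaux n)
      (by linarith : -δ ≤ δ) (fun u _ => kaux_nonneg n u)
    rw [intervalIntegral_kaux] at h
    linarith
  -- integrability
  have hint : ∀ a b : ℝ, IntervalIntegrable (fun x => kaux n x * φ x) volume a b :=
    fun a b => ((continuous_kaux n).mul hφc).intervalIntegrable a b
  -- split the integral
  set E1 : ℝ := ∫ x in (-A)..(-δ), kaux n x * φ x with hE1def
  set Emid : ℝ := ∫ x in (-δ)..δ, kaux n x * φ x with hEmiddef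
  set E3 : ℝ := ∫ x in δ..A, kaux n x * φ x with hE3def
  have hsplit : (∫ x in (-A)..A, kaux n x * φ x) = E1 + Emid + E3 := by
    rw [hE1def, hEmiddef, hE3def,
      intervalIntegral.integral_add_adjacent_intervals (hint _ _) (hint _ _),
      intervalIntegral.integral_add_adjacent_intervals (hint _ _) (hint _ _)]
  -- middle decomposition
  set E2 : ℝ := ∫ x in (-δ)..δ, kaux n x * (φ x - φ 0) with hE2def
  have hmid : Emid = E2 + φ 0 * (g3 - g2) := by
    have hsub : E2 = Emid - φ 0 * (g3 - g2) := by
      rw [hE2def, hEmiddef]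
      have : ∀ x : ℝ, kaux n x * (φ x - φ 0) = kaux n x * φ x - kaux n x * φ 0 := by
        intro x; ring
      simp only [this]
      rw [intervalIntegral.integral_sub (hint _ _)
        ((show Continuous (fun x => kaux n x * φ 0) from (continuous_kaux n).mul continuous_const) |>.intervalIntegrable _ _),
        intervalIntegral.integral_mul_const, intervalIntegral_kaux]
      ring
    linarith
  -- bounds
  have hE1b : |E1| ≤ M * C := by
    have h := abs_intervalIntegral_kaux_mul_le n (by linarith : -A ≤ -δ) hφc hM0
      (fun x _ => hMabs x)
    calc |E1| ≤ M * (g2 - g1) := h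
      _ ≤ M * C := by
        apply mul_le_mul_of_nonneg_left _ hM0
        linarith
  have hE3b : |E3| ≤ M * C := by
    have h := abs_intervalIntegral_kaux_mul_le n (by linarith : δ ≤ A) hφc hM0
      (fun x _ => hMabs x)
    calc |E3| ≤ M * (g4 - g3) := h
      _ ≤ M * C := by
        apply mul_le_mul_of_nonneg_left _ hM0
        linarith
  have hE2b : |E2| ≤ ε / 4 * (n : ℝ) := by
    have h := abs_intervalIntegral_kaux_mul_le n (by linarith : -δ ≤ δ)
      (hφc.sub continuous_const) (by positivity : (0:ℝ) ≤ ε / 4) hφδ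
    calc |E2| ≤ ε / 4 * (g3 - g2) := h
      _ ≤ ε / 4 * (n : ℝ) := by
        apply mul_le_mul_of_nonneg_left _ (by positivity)
        linarith
  have hzabs : |g3 - g2 - (n : ℝ)| ≤ 2 * C := by
    rw [abs_le]
    constructor <;> linarith
  have hzb : |φ 0 * (g3 - g2 - (n : ℝ))| ≤ |φ 0| * (2 * C) := by
    rw [abs_mul]
    exact mul_le_mul_of_nonneg_left hzabs (abs_nonneg _)
  -- final computation
  rw [Real.dist_eq]
  have hrw : 1 / (n : ℝ) * (E1 + Emid + E3) - φ 0
      = (E1 + E2 + E3 + φ 0 * (g3 - g2 - (n : ℝ))) / n := by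
    rw [hmid]
    field_simp
    ring
  rw [hsplit, hrw, abs_div, abs_of_pos hnpos]
  have hnum : |E1 + E2 + E3 + φ 0 * (g3 - g2 - (n : ℝ))|
      ≤ 2 * M * C + 2 * |φ 0| * C + ε / 4 * (n : ℝ) := by
    have t1 := abs_add_le (E1 + E2 + E3) (φ 0 * (g3 - g2 - (n : ℝ)))
    have t2 := abs_add_le (E1 + E2) E3
    have t3 := abs_add_le E1 E2
    linarith only [t1, t2, t3, hE1b, hE2b, hE3b, hzb]
  have hN0' : 2 * M * C + 2 * |φ 0| * C < ε / 4 * (n : ℝ) := by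
    have h1 : (2 * M * C + 2 * |φ 0| * C) / (ε / 4) < (N0 : ℝ) := hN0
    have h2 : (N0 : ℝ) ≤ (n : ℝ) := by exact_mod_cast hnN0
    have h3 : 0 < ε / 4 := by positivity
    rw [div_lt_iff₀ h3] at h1
    nlinarith [h1, h2, h3]
  calc |E1 + E2 + E3 + φ 0 * (g3 - g2 - (n : ℝ))| / (n : ℝ)
      ≤ (2 * M * C + 2 * |φ 0| * C + ε / 4 * (n : ℝ)) / (n : ℝ) := by
        gcongr
    _ < ε := by
        rw [div_lt_iff₀ hnpos]
        nlinarith [hN0', mul_pos hε hnpos]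
end

section
/- For each natural number n ≥ 1, the second derivative F_n'' of F_n(x) = log(∑_{j=0}^n e^{jx}) is integrable on ℝ and ∫_ℝ F_n''(x) dx = n. -/
open MeasureTheory Finset Real

/-- For each `n ≥ 1`, the second derivative of `F_n(x) = log (∑_{j=0}^n e^{jx})` is integrable
on `ℝ` and its integral over `ℝ` equals `n`. -/
theorem integrable_and_integral_second_deriv_log_sum_exp (n : ℕ) (hn : 1 ≤ n) :
    Integrable
      (deriv (deriv (fun y : ℝ =>
        Real.log (∑ j ∈ Finset.range (n + 1), Real.exp (j * y))))) ∧
    ∫ x : ℝ,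
        deriv (deriv (fun y : ℝ =>
          Real.log (∑ j ∈ Finset.range (n + 1), Real.exp (j * y)))) x = (n : ℝ) := by
  set A : ℝ → ℝ := fun x => ∑ j ∈ Finset.range (n + 1), Real.exp (j * x) with hA_def
  set B : ℝ → ℝ := fun x => ∑ j ∈ Finset.range (n + 1), (j : ℝ) * Real.exp (j * x) with hB_def
  set C : ℝ → ℝ := fun x => ∑ j ∈ Finset.range (n + 1), (j : ℝ) ^ 2 * Real.exp (j * x)
    with hC_def
  set g : ℝ → ℝ := fun x => B x / A x with hg_def
  set G : ℝ → ℝ := fun x => (C x * A x - B x * B x) / (A x) ^ 2 with hG_def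
  have hApos : ∀ x, 0 < A x := by
    intro x
    apply Finset.sum_pos (fun j _ => Real.exp_pos _)
    exact Finset.nonempty_range_iff.2 (Nat.succ_ne_zero n)
  have hAd : ∀ x, HasDerivAt A (B x) x := by
    intro x
    apply HasDerivAt.fun_sum
    intro j _
    have h1 : HasDerivAt (fun y : ℝ => (j : ℝ) * y) (j : ℝ) x := by
      simpa using (hasDerivAt_id x).const_mul (j : ℝ)
    have := h1.exp
    simpa [mul_comm] using this
  have hBd : ∀ x, HasDerivAt B (C x) x := by
    intro x
    apply HasDerivAt.fun_sum
    intro j _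
    have h1 : HasDerivAt (fun y : ℝ => (j : ℝ) * y) (j : ℝ) x := by
      simpa using (hasDerivAt_id x).const_mul (j : ℝ)
    have h2 := (h1.exp).const_mul (j : ℝ)
    have : (j : ℝ) * (Real.exp (j * x) * (j : ℝ)) = (j : ℝ) ^ 2 * Real.exp (j * x) := by ring
    simpa [this] using h2
  have hgd : ∀ x, HasDerivAt g (G x) x := by
    intro x
    have := (hBd x).div (hAd x) (ne_of_gt (hApos x))
    exact this
  have hF : deriv (fun y : ℝ =>
      Real.log (∑ j ∈ Finset.range (n + 1), Real.exp (j * y))) = g := by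
    funext x
    have : HasDerivAt (fun y : ℝ =>
        Real.log (∑ j ∈ Finset.range (n + 1), Real.exp (j * y))) (B x / A x) x :=
      (hAd x).log (ne_of_gt (hApos x))
    exact this.deriv
  have hG : deriv (deriv (fun y : ℝ =>
      Real.log (∑ j ∈ Finset.range (n + 1), Real.exp (j * y)))) = G := by
    rw [hF]; funext x; exact (hgd x).deriv
  -- nonnegativity of G via Cauchy-Schwarz
  have hGnonneg : ∀ x, 0 ≤ G x := by
    intro x
    apply div_nonneg _ (sq_nonneg _)
    rw [sub_nonneg]
    have key := Finset.sum_mul_sq_le_sq_mul_sq (Finset.range (n + 1))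
      (fun j => Real.exp ((j : ℝ) * x / 2)) (fun j => (j : ℝ) * Real.exp ((j : ℝ) * x / 2))
    have hee : ∀ j : ℕ, Real.exp ((j : ℝ) * x / 2) * Real.exp ((j : ℝ) * x / 2)
        = Real.exp ((j : ℝ) * x) := by
      intro j
      rw [← Real.exp_add]
      ring_nf
    have e1 : ∀ j : ℕ, Real.exp ((j : ℝ) * x / 2) * ((j : ℝ) * Real.exp ((j : ℝ) * x / 2))
        = (j : ℝ) * Real.exp ((j : ℝ) * x) := by
      intro j
      calc Real.exp ((j : ℝ) * x / 2) * ((j : ℝ) * Real.exp ((j : ℝ) * x / 2))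
          = (j : ℝ) * (Real.exp ((j : ℝ) * x / 2) * Real.exp ((j : ℝ) * x / 2)) := by ring
        _ = (j : ℝ) * Real.exp ((j : ℝ) * x) := by rw [hee]
    have e2 : ∀ j : ℕ, Real.exp ((j : ℝ) * x / 2) ^ 2 = Real.exp ((j : ℝ) * x) := by
      intro j
      rw [sq, hee]
    have e3 : ∀ j : ℕ, ((j : ℝ) * Real.exp ((j : ℝ) * x / 2)) ^ 2
        = (j : ℝ) ^ 2 * Real.exp ((j : ℝ) * x) := by
      intro j
      rw [mul_pow, e2]
    simp only [e1, e2, e3] at key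
    calc B x * B x = (B x) ^ 2 := by ring
      _ ≤ A x * C x := key
      _ = C x * A x := by ring
  -- limit at -infinity
  have hbot : Filter.Tendsto g Filter.atBot (nhds 0) := by
    have hAlim : Filter.Tendsto A Filter.atBot
        (nhds (∑ j ∈ Finset.range (n + 1), if j = 0 then (1 : ℝ) else 0)) := by
      apply tendsto_finset_sum
      intro j _
      rcases Nat.eq_zero_or_pos j with rfl | hj
      · simpa using tendsto_const_nhds
      · simp only [Nat.pos_iff_ne_zero.mp hj, if_neg (Nat.pos_iff_ne_zero.mp hj)]
        have h1 : Filter.Tendsto (fun x : ℝ => (j : ℝ) * x) Filter.atBot Filter.atBot := by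
          apply Filter.Tendsto.const_mul_atBot (by exact_mod_cast hj) Filter.tendsto_id
        exact Real.tendsto_exp_atBot.comp h1
    have hBlim : Filter.Tendsto B Filter.atBot (nhds 0) := by
      have : Filter.Tendsto B Filter.atBot
          (nhds (∑ j ∈ Finset.range (n + 1), (j : ℝ) * (if j = 0 then (1 : ℝ) else 0))) := by
        apply tendsto_finset_sum
        intro j _
        rcases Nat.eq_zero_or_pos j with rfl | hj
        · simpa using tendsto_const_nhds
        · simp only [if_neg (Nat.pos_iff_ne_zero.mp hj)]
          have h1 : Filter.Tendsto (fun x : ℝ => (j : ℝ) * x) Filter.atBot Filter.atBot := by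
            apply Filter.Tendsto.const_mul_atBot (by exact_mod_cast hj) Filter.tendsto_id
          have := (Real.tendsto_exp_atBot.comp h1).const_mul (j : ℝ)
          simpa using this
      simpa using this
    have hsum : (∑ j ∈ Finset.range (n + 1), if j = 0 then (1 : ℝ) else 0) = 1 := by
      rw [Finset.sum_ite_eq' (Finset.range (n + 1)) 0 (fun _ => (1 : ℝ))]
      simp
    rw [hsum] at hAlim
    have := hBlim.div hAlim one_ne_zero
    rw [zero_div] at this
    exact this
  -- limit at +infinity
  have htop : Filter.Tendsto g Filter.atTop (nhds (n : ℝ)) := by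
    set A₁ : ℝ → ℝ := fun x => ∑ j ∈ Finset.range (n + 1), Real.exp (((j : ℝ) - n) * x)
    set B₁ : ℝ → ℝ := fun x => ∑ j ∈ Finset.range (n + 1), (j : ℝ) * Real.exp (((j : ℝ) - n) * x)
    have hgx : ∀ x, g x = B₁ x / A₁ x := by
      intro x
      have hexp : ∀ j : ℕ, Real.exp (((j : ℝ) - n) * x)
          = Real.exp ((j : ℝ) * x) * Real.exp (-(n : ℝ) * x) := by
        intro j
        rw [← Real.exp_add]
        ring_nf
      have hA1 : A₁ x = A x * Real.exp (-(n : ℝ) * x) := by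
        simp only [A₁, hexp, hA_def, Finset.sum_mul]
      have hB1 : B₁ x = B x * Real.exp (-(n : ℝ) * x) := by
        simp only [B₁, hexp, hB_def, Finset.sum_mul, mul_assoc]
      rw [hA1, hB1, mul_div_mul_right _ _ (Real.exp_ne_zero _)]
    have hterm : ∀ j ∈ Finset.range (n + 1),
        Filter.Tendsto (fun x : ℝ => Real.exp (((j : ℝ) - n) * x)) Filter.atTop
          (nhds (if j = n then (1 : ℝ) else 0)) := by
      intro j hj
      rcases eq_or_ne j n with rfl | hjn
      · simpa using tendsto_const_nhds
      · have hjlt : j < n := lt_of_le_of_ne (Nat.lt_succ_iff.mp (Finset.mem_range.mp hj)) hjn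
        have hneg : ((j : ℝ) - n) < 0 := by
          have : (j : ℝ) < n := by exact_mod_cast hjlt
          linarith
        simp only [if_neg hjn]
        have h1 : Filter.Tendsto (fun x : ℝ => ((j : ℝ) - n) * x) Filter.atTop Filter.atBot :=
          Filter.Tendsto.neg_mul_atTop hneg tendsto_const_nhds Filter.tendsto_id
        exact Real.tendsto_exp_atBot.comp h1
    have hA1lim : Filter.Tendsto A₁ Filter.atTop (nhds 1) := by
      have := tendsto_finset_sum (Finset.range (n + 1)) hterm
      have hsum : (∑ j ∈ Finset.range (n + 1), if j = n then (1 : ℝ) else 0) = 1 := by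
        rw [Finset.sum_ite_eq' (Finset.range (n + 1)) n (fun _ => (1 : ℝ))]
        simp
      rwa [hsum] at this
    have hB1lim : Filter.Tendsto B₁ Filter.atTop (nhds (n : ℝ)) := by
      have := tendsto_finset_sum (Finset.range (n + 1))
        (fun j hj => ((hterm j hj).const_mul (j : ℝ)))
      have hsum : (∑ j ∈ Finset.range (n + 1), (j : ℝ) * (if j = n then (1 : ℝ) else 0))
          = (n : ℝ) := by
        have : ∀ j : ℕ, (j : ℝ) * (if j = n then (1 : ℝ) else 0)
            = if j = n then (j : ℝ) else 0 := by
          intro j; split <;> simp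
        rw [Finset.sum_congr rfl (fun j _ => this j),
          Finset.sum_ite_eq' (Finset.range (n + 1)) n (fun j => (j : ℝ))]
        simp
      rwa [hsum] at this
    have := hB1lim.div hA1lim one_ne_zero
    simp only [div_one] at this
    exact Filter.Tendsto.congr (fun x => (hgx x).symm) this
  -- integrability
  have hIoi : IntegrableOn G (Set.Ioi (0 : ℝ)) := by
    exact integrableOn_Ioi_deriv_of_nonneg' (fun x _ => hgd x)
      (fun x _ => hGnonneg x) htop
  have hIic : IntegrableOn G (Set.Iic (0 : ℝ)) := by
    have hrefl : IntegrableOn (fun x => G (-x)) (Set.Ioi (0 : ℝ)) := by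
      have hd : ∀ x : ℝ, HasDerivAt (fun y : ℝ => -g (-y)) (G (-x)) x := by
        intro x
        have h1 : HasDerivAt (fun y : ℝ => g (-y)) (G (-x) * (-1)) x :=
          (hgd (-x)).comp x (hasDerivAt_neg x)
        have := h1.neg
        rw [show -(G (-x) * -1) = G (-x) by ring] at this
        exact this
      have hlim : Filter.Tendsto (fun y : ℝ => -g (-y)) Filter.atTop (nhds 0) := by
        have := (hbot.comp Filter.tendsto_neg_atTop_atBot).neg
        simpa using this
      exact integrableOn_Ioi_deriv_of_nonneg' (fun x _ => hd x)
        (fun x _ => hGnonneg (-x)) hlim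
    have h_map : (volume.restrict (Set.Ioi (0 : ℝ))).map Neg.neg
        = volume.restrict (Set.Iio (0 : ℝ)) := by
      conv => rhs; rw [← Measure.map_neg_eq_self (volume : Measure ℝ),
        measurableEmbedding_neg.restrict_map]
      simp
    have hIio : IntegrableOn G (Set.Iio (0 : ℝ)) := by
      rw [IntegrableOn, ← h_map, measurableEmbedding_neg.integrable_map_iff]
      exact hrefl
    rwa [integrableOn_Iic_iff_integrableOn_Iio]
  have hInt : Integrable G := by
    rw [← integrableOn_univ, ← Set.Iic_union_Ioi (a := (0 : ℝ)), integrableOn_union]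
    exact ⟨hIic, hIoi⟩
  rw [hG]
  refine ⟨hInt, ?_⟩
  have := integral_of_hasDerivAt_of_tendsto hgd hInt hbot htop
  simpa using this
end

section
/- For every real c > 0, the limit as n → ∞ of (1/n) · ∫_{{x ∈ ℝ : |x| ≥ c}} F_n''(x) dx equals 0, where F_n'' is the second derivative of F_n(x) = log(∑_{j=0}^n e^{jx}). -/
open MeasureTheory Filter Finset Real

open Topology


noncomputable def expS (n : ℕ) (x : ℝ) : ℝ := ∑ j ∈ Finset.range (n + 1), Real.exp (j * x)
noncomputable def expS1 (n : ℕ) (x : ℝ) : ℝ := ∑ j ∈ Finset.range (n + 1), (j : ℝ) * Real.exp (j * x)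
noncomputable def expS2 (n : ℕ) (x : ℝ) : ℝ := ∑ j ∈ Finset.range (n + 1), (j : ℝ) ^ 2 * Real.exp (j * x)
noncomputable def expG (n : ℕ) (x : ℝ) : ℝ := expS1 n x / expS n x
noncomputable def expH (n : ℕ) (x : ℝ) : ℝ :=
  (expS2 n x * expS n x - expS1 n x * expS1 n x) / expS n x ^ 2

lemma expS_pos (n : ℕ) (x : ℝ) : 0 < expS n x :=
  Finset.sum_pos (fun j _ => Real.exp_pos _) Finset.nonempty_range_add_one

lemma expS1_nonneg (n : ℕ) (x : ℝ) : 0 ≤ expS1 n x :=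
  Finset.sum_nonneg fun j _ => mul_nonneg (Nat.cast_nonneg j) (Real.exp_pos _).le

lemma expG_nonneg (n : ℕ) (x : ℝ) : 0 ≤ expG n x :=
  div_nonneg (expS1_nonneg n x) (expS_pos n x).le

lemma hasDerivAt_expS (n : ℕ) (x : ℝ) : HasDerivAt (expS n) (expS1 n x) x := by
  unfold expS expS1
  apply HasDerivAt.fun_sum (F := ℝ)
  intro j _
  have h : HasDerivAt (fun y : ℝ => Real.exp (j * y)) (Real.exp (j * x) * ((j : ℝ) * 1)) x :=
    ((hasDerivAt_id x).const_mul (j : ℝ)).exp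
  exact h.congr_deriv (by ring)

lemma hasDerivAt_expS1 (n : ℕ) (x : ℝ) : HasDerivAt (expS1 n) (expS2 n x) x := by
  unfold expS1 expS2
  apply HasDerivAt.fun_sum (F := ℝ)
  intro j _
  have h : HasDerivAt (fun y : ℝ => (j : ℝ) * Real.exp (j * y))
      ((j : ℝ) * (Real.exp (j * x) * ((j : ℝ) * 1))) x :=
    (((hasDerivAt_id x).const_mul (j : ℝ)).exp).const_mul (j : ℝ)
  exact h.congr_deriv (by ring)

lemma hasDerivAt_logS (n : ℕ) (x : ℝ) :
    HasDerivAt (fun y : ℝ => Real.log (∑ j ∈ Finset.range (n + 1), Real.exp (j * y)))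
      (expG n x) x :=
  (hasDerivAt_expS n x).log (expS_pos n x).ne'

lemma deriv_logS (n : ℕ) :
    deriv (fun y : ℝ => Real.log (∑ j ∈ Finset.range (n + 1), Real.exp (j * y))) = expG n :=
  funext fun x => (hasDerivAt_logS n x).deriv

lemma hasDerivAt_expG (n : ℕ) (x : ℝ) : HasDerivAt (expG n) (expH n x) x :=
  (hasDerivAt_expS1 n x).div (hasDerivAt_expS n x) (expS_pos n x).ne'

lemma second_deriv_eq (n : ℕ) (x : ℝ) :
    deriv (deriv (fun y : ℝ => Real.log (∑ j ∈ Finset.range (n + 1), Real.exp (j * y)))) x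
      = expH n x := by
  rw [deriv_logS n]; exact (hasDerivAt_expG n x).deriv

lemma expH_nonneg (n : ℕ) (x : ℝ) : 0 ≤ expH n x := by
  apply div_nonneg _ (sq_nonneg _)
  rw [sub_nonneg]
  have h := Finset.sum_mul_sq_le_sq_mul_sq (Finset.range (n + 1))
    (fun j => Real.exp (j * x / 2)) (fun j => (j : ℝ) * Real.exp (j * x / 2))
  have e1 : ∀ j : ℕ, Real.exp ((j : ℝ) * x / 2) ^ 2 = Real.exp (j * x) := by
    intro j; rw [sq, ← Real.exp_add]; ring_nf
  calc expS1 n x * expS1 n x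
      = (∑ j ∈ Finset.range (n + 1),
          Real.exp ((j : ℝ) * x / 2) * ((j : ℝ) * Real.exp ((j : ℝ) * x / 2))) ^ 2 := by
        rw [sq]; congr 1 <;>
        · refine Finset.sum_congr rfl fun j _ => ?_
          rw [show Real.exp (↑j * x / 2) * (↑j * Real.exp (↑j * x / 2))
              = (j : ℝ) * (Real.exp (↑j * x / 2) ^ 2) by ring, e1]
    _ ≤ (∑ j ∈ Finset.range (n + 1), Real.exp ((j : ℝ) * x / 2) ^ 2) *
        ∑ j ∈ Finset.range (n + 1), ((j : ℝ) * Real.exp ((j : ℝ) * x / 2)) ^ 2 := h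
    _ = expS n x * expS2 n x := by
        congr 1
        · exact Finset.sum_congr rfl fun j _ => e1 j
        · refine Finset.sum_congr rfl fun j _ => ?_
          rw [mul_pow, e1]
    _ = expS2 n x * expS n x := mul_comm _ _

lemma tendsto_expS_atBot (n : ℕ) : Tendsto (expS n) atBot (𝓝 1) := by
  have h : ∀ j ∈ Finset.range (n + 1),
      Tendsto (fun x : ℝ => Real.exp (j * x)) atBot (𝓝 (if j = 0 then 1 else 0)) := by
    intro j _
    rcases Nat.eq_zero_or_pos j with h | h
    · simp [h]
    · have h2 : Tendsto (fun x : ℝ => (j : ℝ) * x) atBot atBot :=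
        tendsto_id.const_mul_atBot (by positivity)
      have h3 : Tendsto (fun x : ℝ => Real.exp ((j : ℝ) * x)) atBot (𝓝 0) :=
        Real.tendsto_exp_atBot.comp h2
      simpa [Nat.pos_iff_ne_zero.1 h] using h3
  have := tendsto_finset_sum _ h
  rw [show expS n = fun x => ∑ j ∈ Finset.range (n + 1), Real.exp (j * x) from rfl]
  simpa using this

lemma tendsto_expS1_atBot (n : ℕ) : Tendsto (expS1 n) atBot (𝓝 0) := by
  have h : ∀ j ∈ Finset.range (n + 1),
      Tendsto (fun x : ℝ => (j : ℝ) * Real.exp (j * x)) atBot (𝓝 0) := by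
    intro j _
    rcases Nat.eq_zero_or_pos j with h | h
    · simp [h]
    · have h2 : Tendsto (fun x : ℝ => (j : ℝ) * x) atBot atBot :=
        tendsto_id.const_mul_atBot (by positivity)
      have := (Real.tendsto_exp_atBot.comp h2).const_mul (j : ℝ)
      simpa using this
  have := tendsto_finset_sum _ h
  rw [show expS1 n = fun x => ∑ j ∈ Finset.range (n + 1), (j : ℝ) * Real.exp (j * x) from rfl]
  simpa using this

lemma tendsto_expG_atBot (n : ℕ) : Tendsto (expG n) atBot (𝓝 0) := by
  have := (tendsto_expS1_atBot n).div (tendsto_expS_atBot n) one_ne_zero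
  simp only [zero_div] at this
  exact this

lemma expG_eq (n : ℕ) (x : ℝ) :
    expG n x = (∑ j ∈ Finset.range (n + 1), (j : ℝ) * Real.exp (((j : ℝ) - n) * x)) /
      (∑ j ∈ Finset.range (n + 1), Real.exp (((j : ℝ) - n) * x)) := by
  have e := Real.exp_ne_zero (-(n : ℝ) * x)
  have h1 : ∑ j ∈ Finset.range (n + 1), (j : ℝ) * Real.exp (((j : ℝ) - n) * x)
      = expS1 n x * Real.exp (-(n : ℝ) * x) := by
    rw [expS1, Finset.sum_mul]
    refine Finset.sum_congr rfl fun j _ => ?_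
    rw [mul_assoc, ← Real.exp_add]
    ring_nf
  have h2 : ∑ j ∈ Finset.range (n + 1), Real.exp (((j : ℝ) - n) * x)
      = expS n x * Real.exp (-(n : ℝ) * x) := by
    rw [expS, Finset.sum_mul]
    refine Finset.sum_congr rfl fun j _ => ?_
    rw [← Real.exp_add]
    ring_nf
  rw [h1, h2, mul_div_mul_right _ _ e, expG]

lemma term_atTop (n j : ℕ) (hj : j ∈ Finset.range (n + 1)) :
    Tendsto (fun x : ℝ => Real.exp (((j : ℝ) - n) * x)) atTop (𝓝 (if j = n then 1 else 0)) := by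
  rcases eq_or_lt_of_le (Nat.lt_succ_iff.1 (Finset.mem_range.1 hj)) with h | h
  · simp [h]
  · have hneg : (j : ℝ) - n < 0 := by
      have : (j : ℝ) < n := by exact_mod_cast h
      linarith
    have h2 : Tendsto (fun x : ℝ => ((j : ℝ) - n) * x) atTop atBot :=
      (tendsto_const_mul_atBot_of_neg hneg).2 tendsto_id
    have h3 : Tendsto (fun x : ℝ => Real.exp (((j : ℝ) - n) * x)) atTop (𝓝 0) :=
      Real.tendsto_exp_atBot.comp h2
    simpa [h.ne] using h3

lemma tendsto_expG_atTop (n : ℕ) : Tendsto (expG n) atTop (𝓝 n) := by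
  have hnum : Tendsto (fun x : ℝ => ∑ j ∈ Finset.range (n + 1),
      (j : ℝ) * Real.exp (((j : ℝ) - n) * x)) atTop (𝓝 n) := by
    have h : ∀ j ∈ Finset.range (n + 1),
        Tendsto (fun x : ℝ => (j : ℝ) * Real.exp (((j : ℝ) - n) * x)) atTop
          (𝓝 (if j = n then (j : ℝ) else 0)) := by
      intro j hj
      have := (term_atTop n j hj).const_mul (j : ℝ)
      rcases eq_or_ne j n with h | h <;> simpa [h] using this
    have := tendsto_finset_sum _ h
    simpa [Finset.sum_ite_eq' (Finset.range (n + 1)) n (fun j => (j : ℝ)),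
      Finset.self_mem_range_succ] using this
  have hden : Tendsto (fun x : ℝ => ∑ j ∈ Finset.range (n + 1),
      Real.exp (((j : ℝ) - n) * x)) atTop (𝓝 1) := by
    have := tendsto_finset_sum _ (fun j hj => term_atTop n j hj)
    simpa [Finset.sum_ite_eq' (Finset.range (n + 1)) n (fun _ => (1 : ℝ)),
      Finset.self_mem_range_succ] using this
  have := hnum.div hden one_ne_zero
  simp only [div_one] at this
  exact Tendsto.congr (fun x => (expG_eq n x).symm) this

lemma continuous_expS (n : ℕ) : Continuous (expS n) :=
  continuous_finset_sum _ fun j _ =>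
    Real.continuous_exp.comp (continuous_const.mul continuous_id)

lemma continuous_expS1 (n : ℕ) : Continuous (expS1 n) :=
  continuous_finset_sum _ fun j _ =>
    continuous_const.mul (Real.continuous_exp.comp (continuous_const.mul continuous_id))

lemma continuous_expS2 (n : ℕ) : Continuous (expS2 n) :=
  continuous_finset_sum _ fun j _ =>
    continuous_const.mul (Real.continuous_exp.comp (continuous_const.mul continuous_id))

lemma continuous_expH (n : ℕ) : Continuous (expH n) :=
  (((continuous_expS2 n).mul (continuous_expS n)).sub
    ((continuous_expS1 n).mul (continuous_expS1 n))).div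
    ((continuous_expS n).pow 2) fun x => pow_ne_zero 2 (expS_pos n x).ne'

lemma integral_Ioi_expH (c : ℝ) (n : ℕ) :
    ∫ x in Set.Ioi c, expH n x = (n : ℝ) - expG n c :=
  integral_Ioi_of_hasDerivAt_of_nonneg' (fun x _ => hasDerivAt_expG n x)
    (fun x _ => expH_nonneg n x) (tendsto_expG_atTop n)

lemma integrableOn_Ioi_expH (c : ℝ) (n : ℕ) : IntegrableOn (expH n) (Set.Ioi c) :=
  integrableOn_Ioi_deriv_of_nonneg' (fun x _ => hasDerivAt_expG n x)
    (fun x _ => expH_nonneg n x) (tendsto_expG_atTop n)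

lemma integrableOn_Iic_expH (c : ℝ) (n : ℕ) : IntegrableOn (expH n) (Set.Iic c) := by
  have hba : Tendsto (fun i : ℕ => -(i : ℝ)) atTop atBot :=
    tendsto_neg_atTop_atBot.comp tendsto_natCast_atTop_atTop
  apply integrableOn_Iic_of_intervalIntegral_norm_bounded (expG n c) c
    (a := fun i : ℕ => -(i : ℝ)) (l := atTop)
  · intro i
    exact (continuous_expH n).integrableOn_Ioc
  · exact hba
  · filter_upwards [hba.eventually (eventually_le_atBot c)] with i hi
    have hnorm : (∫ x in -(i : ℝ)..c, ‖expH n x‖) = ∫ x in -(i : ℝ)..c, expH n x :=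
      intervalIntegral.integral_congr fun x _ => Real.norm_of_nonneg (expH_nonneg n x)
    rw [hnorm, intervalIntegral.integral_eq_sub_of_hasDerivAt
      (fun x _ => hasDerivAt_expG n x) ((continuous_expH n).intervalIntegrable _ _)]
    have := expG_nonneg n (-(i : ℝ))
    linarith

lemma integral_Iic_expH (c : ℝ) (n : ℕ) :
    ∫ x in Set.Iic c, expH n x = expG n c := by
  have h := integral_Iic_of_hasDerivAt_of_tendsto' (fun x _ => hasDerivAt_expG n x)
    (integrableOn_Iic_expH c n) (tendsto_expG_atBot n)
  simpa using h

lemma summableK {c : ℝ} (hc : 0 < c) :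
    Summable (fun k : ℕ => (k : ℝ) * Real.exp (-c) ^ k) := by
  have hr : ‖Real.exp (-c)‖ < 1 := by
    rw [Real.norm_eq_abs, abs_of_pos (Real.exp_pos _)]
    exact Real.exp_lt_one_iff.2 (by linarith)
  simpa using summable_pow_mul_geometric_of_norm_lt_one 1 hr

lemma bound_neg {c : ℝ} (hc : 0 < c) (n : ℕ) :
    expG n (-c) ≤ ∑' k : ℕ, (k : ℝ) * Real.exp (-c) ^ k := by
  have hS1 : expS1 n (-c) ≤ ∑' k : ℕ, (k : ℝ) * Real.exp (-c) ^ k := by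
    rw [expS1]
    rw [Finset.sum_congr rfl (fun j _ => by rw [← Real.exp_nat_mul] :
      ∀ j ∈ Finset.range (n + 1),
        (j : ℝ) * Real.exp ((j : ℝ) * -c) = (j : ℝ) * Real.exp (-c) ^ j)]
    exact Summable.sum_le_tsum _ (fun j _ => by positivity) (summableK hc)
  have hS : 1 ≤ expS n (-c) := by
    have h := Finset.single_le_sum (f := fun j : ℕ => Real.exp ((j : ℝ) * -c))
      (fun j _ => (Real.exp_pos _).le) (Finset.mem_range.2 (Nat.succ_pos n))
    simpa [expS] using h
  exact le_trans (div_le_self (expS1_nonneg n _) hS) hS1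

lemma bound_pos {c : ℝ} (hc : 0 < c) (n : ℕ) :
    (n : ℝ) - expG n c ≤ ∑' k : ℕ, (k : ℝ) * Real.exp (-c) ^ k := by
  set K := ∑' k : ℕ, (k : ℝ) * Real.exp (-c) ^ k with hKdef
  have hK0 : 0 ≤ K := tsum_nonneg fun k => by positivity
  have hSc : Real.exp ((n : ℝ) * c) ≤ expS n c := by
    have h := Finset.single_le_sum (f := fun j : ℕ => Real.exp ((j : ℝ) * c))
      (fun j _ => (Real.exp_pos _).le) (Finset.self_mem_range_succ n)
    simpa [expS] using h
  have key : (n : ℝ) * expS n c - expS1 n c ≤ K * expS n c := by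
    have h1 : (n : ℝ) * expS n c - expS1 n c
        = ∑ j ∈ Finset.range (n + 1), ((n : ℝ) - j) * Real.exp ((j : ℝ) * c) := by
      rw [expS, expS1, Finset.mul_sum, ← Finset.sum_sub_distrib]
      exact Finset.sum_congr rfl fun j _ => by ring
    have h2 : ∑ j ∈ Finset.range (n + 1), ((n : ℝ) - j) * Real.exp ((j : ℝ) * c)
        = ∑ k ∈ Finset.range (n + 1),
            (k : ℝ) * Real.exp (-c) ^ k * Real.exp ((n : ℝ) * c) := by
      rw [← Finset.sum_range_reflect]
      refine Finset.sum_congr rfl fun k hk => ?_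
      have hkn : k ≤ n := Nat.lt_succ_iff.1 (Finset.mem_range.1 hk)
      have e1 : Real.exp (-c) ^ k * Real.exp ((n : ℝ) * c)
          = Real.exp (((n : ℝ) - k) * c) := by
        rw [← Real.exp_nat_mul, ← Real.exp_add]; ring_nf
      have e2 : (↑(n + 1 - 1 - k) : ℝ) = (n : ℝ) - k := by
        have : n + 1 - 1 - k = n - k := rfl
        rw [this, Nat.cast_sub hkn]
      rw [e2, mul_assoc, e1]
      ring_nf
    have h3 : ∑ k ∈ Finset.range (n + 1),
        (k : ℝ) * Real.exp (-c) ^ k * Real.exp ((n : ℝ) * c)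
          ≤ K * Real.exp ((n : ℝ) * c) := by
      rw [← Finset.sum_mul]
      exact mul_le_mul_of_nonneg_right
        (Summable.sum_le_tsum _ (fun j _ => by positivity) (summableK hc)) (Real.exp_pos _).le
    calc (n : ℝ) * expS n c - expS1 n c
        = ∑ k ∈ Finset.range (n + 1),
            (k : ℝ) * Real.exp (-c) ^ k * Real.exp ((n : ℝ) * c) := by rw [h1, h2]
      _ ≤ K * Real.exp ((n : ℝ) * c) := h3
      _ ≤ K * expS n c := mul_le_mul_of_nonneg_left hSc hK0
  have hp := expS_pos n c
  have hG : expG n c * expS n c = expS1 n c := by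
    rw [expG]; field_simp
  rw [sub_le_iff_le_add]
  have hmul : (n : ℝ) * expS n c ≤ (K + expG n c) * expS n c := by
    rw [add_mul, hG]; linarith
  exact le_of_mul_le_mul_right hmul hp

/-- For every real `c > 0`, the limit as `n → ∞` of
`(1/n) · ∫_{|x| ≥ c} F_n''(x) dx` equals `0`, where `F_n(x) = log (∑_{j=0}^n e^{jx})`. -/
theorem tendsto_integral_second_deriv_log_sum_exp_tail (c : ℝ) (hc : 0 < c) :
    Tendsto
      (fun n : ℕ =>
        (1 / (n : ℝ)) *
          ∫ x in {x : ℝ | c ≤ |x|},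
            deriv (deriv (fun y : ℝ =>
              Real.log (∑ j ∈ Finset.range (n + 1), Real.exp (j * y)))) x)
      atTop (nhds 0) := by
  set K := ∑' k : ℕ, (k : ℝ) * Real.exp (-c) ^ k with hKdef
  have hK0 : 0 ≤ K := tsum_nonneg fun k => by positivity
  have hmeas : MeasurableSet {x : ℝ | c ≤ |x|} :=
    (isClosed_le continuous_const continuous_abs).measurableSet
  have hset : {x : ℝ | c ≤ |x|} = Set.Iic (-c) ∪ Set.Ici c := by
    ext x
    simp only [Set.mem_setOf_eq, Set.mem_union, Set.mem_Iic, Set.mem_Ici, le_abs, le_neg]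
    tauto
  have hval : ∀ n : ℕ,
      (∫ x in {x : ℝ | c ≤ |x|},
        deriv (deriv (fun y : ℝ =>
          Real.log (∑ j ∈ Finset.range (n + 1), Real.exp (j * y)))) x)
        = expG n (-c) + ((n : ℝ) - expG n c) := by
    intro n
    simp only [second_deriv_eq]
    rw [hset, setIntegral_union (Set.Iic_disjoint_Ici.2 (by intro h; linarith))
      measurableSet_Ici (integrableOn_Iic_expH (-c) n)
      ((integrableOn_Ici_iff_integrableOn_Ioi).2 (integrableOn_Ioi_expH c n)),
      integral_Ici_eq_integral_Ioi, integral_Iic_expH, integral_Ioi_expH]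
  apply squeeze_zero (g := fun n : ℕ => 2 * K / n)
  · intro n
    refine mul_nonneg (by positivity) (setIntegral_nonneg hmeas fun x _ => ?_)
    rw [second_deriv_eq]
    exact expH_nonneg n x
  · intro n
    rcases Nat.eq_zero_or_pos n with h | h
    · subst h
      simp
    · rw [hval n]
      have h1 := bound_neg hc n
      have h2 := bound_pos hc n
      have hn : (0 : ℝ) < n := by exact_mod_cast h
      calc (1 / (n : ℝ)) * (expG n (-c) + ((n : ℝ) - expG n c))
          ≤ (1 / (n : ℝ)) * (K + K) := by
            apply mul_le_mul_of_nonneg_left (by rw [← hKdef] at h1 h2; linarith) (by positivity)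
        _ = 2 * K / n := by ring
  · exact tendsto_const_div_atTop_nhds_zero_nat (2 * K)
end

section
/- For every real c > 0, the sequence of functions x ↦ (1/n) · F_n''(x) converges to 0 uniformly on the half-line (−∞, −c] as n → ∞, where F_n'' is the second derivative of F_n(x) = log(∑_{j=0}^n e^{jx}). -/
open Filter Finset Real

noncomputable def Sfun (n : ℕ) (x : ℝ) : ℝ := ∑ j ∈ Finset.range (n + 1), Real.exp (j * x)
noncomputable def Tfun (n : ℕ) (x : ℝ) : ℝ := ∑ j ∈ Finset.range (n + 1), Real.exp (j * x) * j
noncomputable def Ufun (n : ℕ) (x : ℝ) : ℝ := ∑ j ∈ Finset.range (n + 1), Real.exp (j * x) * j * j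

lemma Spos (n : ℕ) (x : ℝ) : 0 < Sfun n x := by
  apply Finset.sum_pos (fun j _ => Real.exp_pos _)
  exact ⟨0, Finset.mem_range.2 (Nat.succ_pos n)⟩

lemma hasDerivS (n : ℕ) (x : ℝ) : HasDerivAt (Sfun n) (Tfun n x) x := by
  apply HasDerivAt.fun_sum
  intro j _
  simpa using ((hasDerivAt_id x).const_mul (j : ℝ)).exp

lemma hasDerivT (n : ℕ) (x : ℝ) : HasDerivAt (Tfun n) (Ufun n x) x := by
  apply HasDerivAt.fun_sum
  intro j _
  simpa [mul_comm, mul_assoc, mul_left_comm] using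
    (((hasDerivAt_id x).const_mul (j : ℝ)).exp.mul_const (j : ℝ))

lemma deriv1 (n : ℕ) (x : ℝ) :
    deriv (fun y : ℝ => Real.log (∑ j ∈ Finset.range (n + 1), Real.exp (j * y))) x
      = Tfun n x / Sfun n x := by
  have h := (hasDerivS n x).log (Spos n x).ne'
  simpa [Sfun] using h.deriv

lemma deriv2 (n : ℕ) (x : ℝ) :
    deriv (deriv (fun y : ℝ => Real.log (∑ j ∈ Finset.range (n + 1), Real.exp (j * y)))) x
      = (Ufun n x * Sfun n x - Tfun n x * Tfun n x) / (Sfun n x) ^ 2 := by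
  have hfun : deriv (fun y : ℝ => Real.log (∑ j ∈ Finset.range (n + 1), Real.exp (j * y)))
      = fun y => Tfun n y / Sfun n y := funext (deriv1 n)
  rw [hfun]
  exact ((hasDerivT n x).div (hasDerivS n x) (Spos n x).ne').deriv

/-- For every real `c > 0`, the functions `x ↦ (1/n) · F_n''(x)` converge to `0` uniformly on
`(−∞, −c]` as `n → ∞`, where `F_n(x) = log (∑_{j=0}^n e^{jx})`. -/
theorem tendstoUniformlyOn_second_deriv_log_sum_exp_Iic (c : ℝ) (hc : 0 < c) :
    TendstoUniformlyOn
      (fun (n : ℕ) (x : ℝ) =>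
        (1 / (n : ℝ)) *
          deriv (deriv (fun y : ℝ =>
            Real.log (∑ j ∈ Finset.range (n + 1), Real.exp (j * y)))) x)
      (fun _ => 0) atTop (Set.Iic (-c)) := by
  -- summable majorant
  have hr : Real.exp (-c) < 1 := Real.exp_lt_one_iff.2 (neg_lt_zero.2 hc)
  have hsum : Summable (fun j : ℕ => (j : ℝ) ^ 2 * Real.exp (-c) ^ j) :=
    summable_pow_mul_geometric_of_norm_lt_one 2
      (by rwa [Real.norm_eq_abs, abs_of_pos (Real.exp_pos _)])
  set M : ℝ := ∑' j : ℕ, (j : ℝ) ^ 2 * Real.exp (-c) ^ j with hM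
  have hMnonneg : 0 ≤ M := tsum_nonneg fun j => by positivity
  -- key bound: for x ≤ -c, 0 ≤ F_n''(x) ≤ M
  have key : ∀ (n : ℕ) (x : ℝ), x ≤ -c →
      0 ≤ (Ufun n x * Sfun n x - Tfun n x * Tfun n x) / (Sfun n x) ^ 2 ∧
      (Ufun n x * Sfun n x - Tfun n x * Tfun n x) / (Sfun n x) ^ 2 ≤ M := by
    intro n x hx
    have hS := Spos n x
    have hS1 : (1 : ℝ) ≤ Sfun n x := by
      calc (1:ℝ) = Real.exp ((0:ℕ) * x) := by simp
      _ ≤ Sfun n x := Finset.single_le_sum (f := fun j : ℕ => Real.exp (j * x))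
          (fun j _ => (Real.exp_pos _).le) (Finset.mem_range.2 (Nat.succ_pos n))
    have hU0 : 0 ≤ Ufun n x := Finset.sum_nonneg fun j _ => by positivity
    have hCS : Tfun n x * Tfun n x ≤ Ufun n x * Sfun n x := by
      have := Finset.sum_mul_sq_le_sq_mul_sq (Finset.range (n+1))
        (fun j => Real.exp (j * x / 2) * j) (fun j => Real.exp (j * x / 2))
      calc Tfun n x * Tfun n x
          = (∑ j ∈ Finset.range (n+1), (Real.exp (j * x / 2) * j) * Real.exp (j * x / 2)) ^ 2 := by
            rw [← sq]
            congr 1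
            apply Finset.sum_congr rfl
            intro j _
            rw [mul_comm (Real.exp (↑j * x / 2) * ↑j), ← mul_assoc, ← Real.exp_add]
            ring_nf
        _ ≤ (∑ j ∈ Finset.range (n+1), (Real.exp (j * x / 2) * j) ^ 2) *
            (∑ j ∈ Finset.range (n+1), (Real.exp (j * x / 2)) ^ 2) := this
        _ = Ufun n x * Sfun n x := by
            unfold Ufun Sfun
            congr 1
            · apply Finset.sum_congr rfl
              intro j _
              rw [mul_pow, sq (Real.exp _), ← Real.exp_add]
              ring_nf
            · apply Finset.sum_congr rfl
              intro j _
              rw [sq, ← Real.exp_add]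
              ring_nf
    constructor
    · apply div_nonneg (by linarith) (by positivity)
    · have hUM : Ufun n x ≤ M := by
        have h1 : Ufun n x ≤ ∑ j ∈ Finset.range (n+1), (j : ℝ) ^ 2 * Real.exp (-c) ^ j := by
          apply Finset.sum_le_sum
          intro j _
          rw [← Real.exp_nat_mul, sq]
          have : (j : ℝ) * x ≤ (j : ℝ) * (-c) := by
            rcases Nat.eq_zero_or_pos j with h | h
            · simp [h]
            · exact mul_le_mul_of_nonneg_left hx (Nat.cast_nonneg j)
          have := Real.exp_le_exp.2 this
          nlinarith [Real.exp_pos ((j:ℝ) * x)]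
        exact h1.trans (hsum.sum_le_tsum _ (fun j _ => by positivity))
      calc (Ufun n x * Sfun n x - Tfun n x * Tfun n x) / (Sfun n x) ^ 2
          ≤ (Ufun n x * Sfun n x) / (Sfun n x) ^ 2 := by gcongr; linarith [mul_self_nonneg (Tfun n x)]
        _ = Ufun n x / Sfun n x := by rw [sq]; field_simp
        _ ≤ Ufun n x / 1 := by gcongr
        _ = Ufun n x := div_one _
        _ ≤ M := hUM
  rw [Metric.tendstoUniformlyOn_iff]
  intro ε hε
  have hlim : Tendsto (fun n : ℕ => M / n) atTop (nhds 0) :=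
    tendsto_const_div_atTop_nhds_zero_nat M
  have hev : ∀ᶠ n : ℕ in atTop, M / n < ε := hlim.eventually (gt_mem_nhds hε)
  filter_upwards [hev, eventually_ge_atTop 1] with n hn hn1 x hx
  rw [deriv2, Real.dist_eq]
  obtain ⟨h0, hM'⟩ := key n x hx
  have hn0 : (0:ℝ) < n := by exact_mod_cast hn1
  have habs : (1/(n:ℝ)) * ((Ufun n x * Sfun n x - Tfun n x * Tfun n x) / Sfun n x ^ 2)
      ≤ M / n := by
    rw [div_eq_mul_inv M, mul_comm M, ← one_div]
    exact mul_le_mul_of_nonneg_left hM' (by positivity)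
  rw [zero_sub, abs_neg, abs_of_nonneg (mul_nonneg (by positivity) h0)]
  exact lt_of_le_of_lt habs hn
end

section
/- For every compactly supported continuous function φ : ℂ → ℝ, the limit as n → ∞ of (1/(4πn)) · ∫_ℂ (Δ H_n)(z) · φ(z) dA(z) equals (1/(2π)) · ∫_0^{2π} φ(e^{iθ}) dθ, where Δ denotes the Laplacian on ℂ ≅ ℝ² (the sum of the two second partial derivatives) and dA is Lebesgue (area) measure on ℂ. -/
open MeasureTheory Filter Finset Real



noncomputable def Sf (n : ℕ) (u : ℝ) : ℝ := ∑ k ∈ Finset.range (n+1), u ^ k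
noncomputable def S1 (n : ℕ) (u : ℝ) : ℝ := ∑ k ∈ Finset.range (n+1), (k:ℝ) * u ^ (k-1)
noncomputable def S2 (n : ℕ) (u : ℝ) : ℝ :=
  ∑ k ∈ Finset.range (n+1), ((k:ℝ) * ((k:ℝ)-1)) * u ^ (k-2)
noncomputable def Tf (n : ℕ) (u : ℝ) : ℝ := ∑ k ∈ Finset.range (n+1), (k:ℝ) * u ^ k

lemma hasDerivAt_Sf (n : ℕ) (u : ℝ) : HasDerivAt (Sf n) (S1 n u) u :=
  HasDerivAt.fun_sum fun k _ => hasDerivAt_pow k u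

lemma hasDerivAt_S1 (n : ℕ) (u : ℝ) : HasDerivAt (S1 n) (S2 n u) u := by
  have : ∀ k ∈ Finset.range (n+1),
      HasDerivAt (fun u : ℝ => (k:ℝ) * u ^ (k-1)) (((k:ℝ) * ((k:ℝ)-1)) * u ^ (k-2)) u := by
    intro k _
    have h := (hasDerivAt_pow (k-1) u).const_mul (k:ℝ)
    refine h.congr_deriv ?_
    match k with
    | 0 => simp
    | 1 => simp
    | (m+2) => push_cast [Nat.add_sub_cancel]; ring_nf
  exact HasDerivAt.fun_sum this

lemma Sf_pos (n : ℕ) {u : ℝ} (hu : 0 ≤ u) : 0 < Sf n u := by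
  unfold Sf
  rw [Finset.sum_range_succ']
  have : 0 ≤ ∑ k ∈ Finset.range n, u ^ (k+1) :=
    Finset.sum_nonneg fun k _ => pow_nonneg hu _
  simp only [pow_zero]
  linarith

lemma Tf_eq (n : ℕ) (u : ℝ) : u * S1 n u = Tf n u := by
  unfold S1 Tf
  rw [Finset.mul_sum]
  refine Finset.sum_congr rfl fun k _ => ?_
  match k with
  | 0 => simp
  | (m+1) => rw [Nat.add_sub_cancel]; ring_nf

lemma S1_nonneg (n : ℕ) {u : ℝ} (hu : 0 ≤ u) : 0 ≤ S1 n u :=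
  Finset.sum_nonneg fun k _ => mul_nonneg (by positivity) (pow_nonneg hu _)

lemma Tf_nonneg (n : ℕ) {u : ℝ} (hu : 0 ≤ u) : 0 ≤ Tf n u :=
  Finset.sum_nonneg fun k _ => mul_nonneg (by positivity) (pow_nonneg hu _)

-- S1 + u * S2 = ∑ k² u^(k-1)
lemma S1_add_mul_S2 (n : ℕ) (u : ℝ) :
    S1 n u + u * S2 n u = ∑ k ∈ Finset.range (n+1), (k:ℝ)^2 * u ^ (k-1) := by
  unfold S1 S2
  rw [Finset.mul_sum, ← Finset.sum_add_distrib]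
  refine Finset.sum_congr rfl fun k _ => ?_
  match k with
  | 0 => simp
  | 1 => push_cast; ring_nf
  | (m+2) =>
    have h1 : m + 2 - 1 = m + 1 := rfl
    have h2 : m + 2 - 2 = m := rfl
    rw [h1, h2]
    push_cast
    ring_nf


lemma keyIneq (n : ℕ) {u : ℝ} (hu : 0 ≤ u) :
    u * (S1 n u)^2 ≤ (∑ k ∈ Finset.range (n+1), (k:ℝ)^2 * u ^ (k-1)) * Sf n u := by
  have cs := sum_mul_sq_le_sq_mul_sq (Finset.range (n+1))
    (fun k => (k:ℝ) * (Real.sqrt u) ^ (k-1)) (fun k => (Real.sqrt u) ^ k)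
  have h1 : ∑ k ∈ Finset.range (n+1),
      ((k:ℝ) * (Real.sqrt u) ^ (k-1)) * (Real.sqrt u) ^ k
      = Real.sqrt u * S1 n u := by
    unfold S1; rw [Finset.mul_sum]
    refine Finset.sum_congr rfl fun k _ => ?_
    match k with
    | 0 => simp
    | (m+1) =>
      rw [Nat.add_sub_cancel]
      have : (Real.sqrt u) ^ m * (Real.sqrt u) ^ (m+1)
          = u ^ m * Real.sqrt u := by
        rw [pow_succ, ← mul_assoc, ← mul_pow, Real.mul_self_sqrt hu]
      calc ((m+1:ℕ):ℝ) * (Real.sqrt u) ^ m * (Real.sqrt u) ^ (m+1)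
          = ((m+1:ℕ):ℝ) * ((Real.sqrt u) ^ m * (Real.sqrt u) ^ (m+1)) := by ring
        _ = ((m+1:ℕ):ℝ) * (u ^ m * Real.sqrt u) := by rw [this]
        _ = Real.sqrt u * (((m+1:ℕ):ℝ) * u ^ m) := by ring
  have h2 : ∑ k ∈ Finset.range (n+1), ((k:ℝ) * (Real.sqrt u) ^ (k-1))^2
      = ∑ k ∈ Finset.range (n+1), (k:ℝ)^2 * u ^ (k-1) := by
    refine Finset.sum_congr rfl fun k _ => ?_
    rw [mul_pow, ← pow_mul, pow_mul', Real.sq_sqrt hu]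
  have h3 : ∑ k ∈ Finset.range (n+1), ((Real.sqrt u) ^ k)^2
      = Sf n u := by
    unfold Sf
    refine Finset.sum_congr rfl fun k _ => ?_
    rw [← pow_mul, pow_mul', Real.sq_sqrt hu]
  rw [h1, h2, h3, mul_pow, Real.sq_sqrt hu] at cs
  simpa [sq] using cs

lemma one_le_Sf (n : ℕ) {u : ℝ} (hu : 0 ≤ u) : 1 ≤ Sf n u := by
  unfold Sf
  rw [Finset.sum_range_succ']
  have : 0 ≤ ∑ k ∈ Finset.range n, u ^ (k+1) :=
    Finset.sum_nonneg fun k _ => pow_nonneg hu _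
  simp only [pow_zero]
  linarith

lemma keyIneq2 (n : ℕ) {u : ℝ} (hu : 0 ≤ u) :
    u * (S1 n u)^2 ≤ (S1 n u + u * S2 n u) * Sf n u := by
  rw [S1_add_mul_S2]
  exact keyIneq n hu


noncomputable def Gd (n : ℕ) (u : ℝ) : ℝ :=
  ((S1 n u + u * S2 n u) * Sf n u - u * (S1 n u)^2) / (Sf n u)^2

noncomputable def Gfun (n : ℕ) (u : ℝ) : ℝ := u * S1 n u / Sf n u

lemma Gd_nonneg (n : ℕ) {u : ℝ} (hu : 0 ≤ u) : 0 ≤ Gd n u :=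
  div_nonneg (by linarith [keyIneq2 n hu]) (sq_nonneg _)

lemma hasDerivAt_G (n : ℕ) {u : ℝ} (hu : Sf n u ≠ 0) :
    HasDerivAt (Gfun n) (Gd n u) u := by
  have hnum : HasDerivAt (fun u : ℝ => u * S1 n u) (S1 n u + u * S2 n u) u := by
    simpa using (hasDerivAt_id u).fun_mul (hasDerivAt_S1 n u)
  have h := hnum.div (hasDerivAt_Sf n u) hu
  refine h.congr_deriv ?_
  unfold Gd
  field_simp

lemma Gfun_nonneg (n : ℕ) {u : ℝ} (hu : 0 ≤ u) : 0 ≤ Gfun n u :=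
  div_nonneg (mul_nonneg hu (S1_nonneg n hu)) (Sf_pos n hu).le

lemma Gfun_le (n : ℕ) {u : ℝ} (hu : 0 ≤ u) : Gfun n u ≤ n := by
  rw [Gfun, div_le_iff₀ (Sf_pos n hu), Tf_eq]
  unfold Tf Sf
  rw [Finset.mul_sum]
  refine Finset.sum_le_sum fun k hk => ?_
  have hk' : (k:ℝ) ≤ n := by
    exact_mod_cast Nat.lt_succ_iff.mp (Finset.mem_range.mp hk)
  exact mul_le_mul_of_nonneg_right hk' (pow_nonneg hu _)

lemma Gfun_le_of_lt_one (n : ℕ) {u : ℝ} (hu : 0 ≤ u) (hu1 : u < 1) :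
    Gfun n u ≤ u / (1-u)^2 := by
  have hSf := Sf_pos n hu
  have hT : Tf n u ≤ u / (1-u)^2 := by
    have hs : HasSum (fun k : ℕ => (k:ℝ) * u ^ k) (u / (1-u)^2) := by
      simpa using hasSum_coe_mul_geometric_of_norm_lt_one
        (show ‖u‖ < 1 by rwa [Real.norm_eq_abs, abs_of_nonneg hu])
    exact sum_le_hasSum _ (fun k _ => mul_nonneg (by positivity) (pow_nonneg hu _)) hs
  have h1 : Gfun n u ≤ Tf n u := by
    rw [Gfun, Tf_eq n u]
    exact div_le_self (Tf_nonneg n hu) (one_le_Sf n hu)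
  linarith

lemma sub_Gfun_le (n : ℕ) {u : ℝ} (hu1 : 1 < u) :
    (n:ℝ) - Gfun n u ≤ u⁻¹ / (1 - u⁻¹)^2 := by
  have hu : (0:ℝ) ≤ u := by linarith
  have hSf := Sf_pos n hu
  have key : (n:ℝ) * Sf n u - Tf n u = ∑ k ∈ Finset.range (n+1), ((n:ℝ)-(k:ℝ)) * u ^ k := by
    unfold Sf Tf
    rw [Finset.mul_sum, ← Finset.sum_sub_distrib]
    exact Finset.sum_congr rfl fun k _ => by ring
  have hpow : (0:ℝ) < u ^ n := pow_pos (by linarith) n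
  have hSfge : u ^ n ≤ Sf n u := by
    unfold Sf
    exact Finset.single_le_sum (f := fun k => u ^ k)
      (fun k _ => pow_nonneg hu _) (Finset.self_mem_range_succ n)
  have hbound : ((n:ℝ) * Sf n u - Tf n u) / Sf n u
      ≤ (∑ k ∈ Finset.range (n+1), ((n:ℝ)-(k:ℝ)) * u ^ k) / u ^ n := by
    rw [key]
    apply div_le_div_of_nonneg_left _ hpow hSfge |>.trans_eq rfl
    · exact Finset.sum_nonneg fun k hk => mul_nonneg
        (by
          have : (k:ℝ) ≤ n := by
            exact_mod_cast Nat.lt_succ_iff.mp (Finset.mem_range.mp hk)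
          linarith) (pow_nonneg hu _)
  have hrefl : (∑ k ∈ Finset.range (n+1), ((n:ℝ)-(k:ℝ)) * u ^ k) / u ^ n
      = ∑ j ∈ Finset.range (n+1), (j:ℝ) * (u⁻¹) ^ j := by
    rw [← Finset.sum_range_reflect (fun k => ((n:ℝ)-(k:ℝ)) * u ^ k) (n+1), Finset.sum_div]
    refine Finset.sum_congr rfl fun j hj => ?_
    have hj' : j ≤ n := Nat.lt_succ_iff.mp (Finset.mem_range.mp hj)
    have h1 : n + 1 - 1 - j = n - j := by omega
    rw [h1]
    have hcast : ((n:ℝ) - ((n - j : ℕ):ℝ)) = (j:ℝ) := by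
      have : ((n - j : ℕ):ℝ) = (n:ℝ) - (j:ℝ) := by
        push_cast [Nat.cast_sub hj']; ring
      rw [this]; ring
    rw [hcast]
    have hne : u ^ n ≠ 0 := ne_of_gt hpow
    have : u ^ (n - j) * u ^ j = u ^ n := by
      rw [← pow_add]; congr 1; omega
    have hj0 : u ^ j ≠ 0 := ne_of_gt (pow_pos (by linarith) j)
    rw [inv_pow, div_eq_iff hne, ← this]
    field_simp
  have hfin : ∑ j ∈ Finset.range (n+1), (j:ℝ) * (u⁻¹) ^ j ≤ u⁻¹ / (1 - u⁻¹)^2 := by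
    have hv0 : (0:ℝ) ≤ u⁻¹ := inv_nonneg.mpr hu
    have hv1 : u⁻¹ < 1 := inv_lt_one_of_one_lt₀ hu1
    have hs : HasSum (fun k : ℕ => (k:ℝ) * (u⁻¹) ^ k) (u⁻¹ / (1-u⁻¹)^2) := by
      simpa using hasSum_coe_mul_geometric_of_norm_lt_one
        (show ‖u⁻¹‖ < 1 by rwa [Real.norm_eq_abs, abs_of_nonneg hv0])
    exact sum_le_hasSum _ (fun k _ => mul_nonneg (by positivity) (pow_nonneg hv0 _)) hs
  have hG : (n:ℝ) - Gfun n u = ((n:ℝ) * Sf n u - Tf n u) / Sf n u := by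
    rw [Gfun, Tf_eq]
    field_simp
  rw [hG]
  calc ((n:ℝ) * Sf n u - Tf n u) / Sf n u
      ≤ (∑ k ∈ Finset.range (n+1), ((n:ℝ)-(k:ℝ)) * u ^ k) / u ^ n := hbound
    _ = ∑ j ∈ Finset.range (n+1), (j:ℝ) * (u⁻¹) ^ j := hrefl
    _ ≤ u⁻¹ / (1 - u⁻¹)^2 := hfin

lemma iteratedDeriv_two_log (n : ℕ) (c : ℝ) (hc : 0 ≤ c) (t : ℝ) :
    iteratedDeriv 2 (fun x : ℝ => Real.log (Sf n (x^2 + c))) t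
      = 2 * S1 n (t^2+c) / Sf n (t^2+c)
        + 4*t^2 * (S2 n (t^2+c) * Sf n (t^2+c) - (S1 n (t^2+c))^2) / (Sf n (t^2+c))^2 := by
  have hq : ∀ x:ℝ, 0 ≤ x^2 + c := fun x => by positivity
  have hpow : ∀ x:ℝ, HasDerivAt (fun x:ℝ => x^2 + c) (2*x) x := by
    intro x
    simpa using (hasDerivAt_pow 2 x).add_const c
  have hd1 : ∀ x:ℝ, HasDerivAt (fun x => Real.log (Sf n (x^2+c)))
      (2*x*S1 n (x^2+c)/Sf n (x^2+c)) x := by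
    intro x
    have hS : HasDerivAt (Sf n) (S1 n (x^2+c)) (x^2+c) := hasDerivAt_Sf n _
    have hlog : HasDerivAt Real.log (Sf n (x^2+c))⁻¹ (Sf n (x^2+c)) :=
      Real.hasDerivAt_log (ne_of_gt (Sf_pos n (hq x)))
    have h := (hlog.comp _ hS).comp x (hpow x)
    refine h.congr_deriv ?_
    have := ne_of_gt (Sf_pos n (hq x))
    field_simp
  have hder1 : deriv (fun x => Real.log (Sf n (x^2+c)))
      = fun x => 2*x*S1 n (x^2+c)/Sf n (x^2+c) := funext fun x => (hd1 x).deriv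
  have hSne := ne_of_gt (Sf_pos n (hq t))
  have hd2 : HasDerivAt (fun x => 2*x*S1 n (x^2+c)/Sf n (x^2+c))
      (2 * S1 n (t^2+c) / Sf n (t^2+c)
        + 4*t^2 * (S2 n (t^2+c) * Sf n (t^2+c) - (S1 n (t^2+c))^2) / (Sf n (t^2+c))^2) t := by
    have hN : HasDerivAt (fun x : ℝ => 2*x*S1 n (x^2+c))
        (2*S1 n (t^2+c) + 2*t*(S2 n (t^2+c) * (2*t))) t := by
      have ha : HasDerivAt (fun x : ℝ => 2*x) 2 t := by
        simpa using (hasDerivAt_id t).const_mul (2:ℝ)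
      have hb : HasDerivAt (fun x : ℝ => S1 n (x^2+c)) (S2 n (t^2+c) * (2*t)) t :=
        (hasDerivAt_S1 n (t^2+c)).comp (h₂ := S1 n) t (hpow t)
      simpa using ha.fun_mul hb
    have hD : HasDerivAt (fun x : ℝ => Sf n (x^2+c)) (S1 n (t^2+c) * (2*t)) t :=
      (hasDerivAt_Sf n (t^2+c)).comp (h₂ := Sf n) t (hpow t)
    have h := hN.div hD hSne
    refine h.congr_deriv ?_
    field_simp
    ring
  show iteratedDeriv 2 _ t = _
  rw [iteratedDeriv_succ, iteratedDeriv_one, hder1]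
  exact hd2.deriv

lemma laplacian_eq (n : ℕ) (z : ℂ) :
    iteratedDeriv 2 (fun x : ℝ => Real.log
        (∑ k ∈ Finset.range (n + 1), ‖(⟨x, z.im⟩ : ℂ)‖ ^ (2 * k))) z.re
    + iteratedDeriv 2 (fun y : ℝ => Real.log
        (∑ k ∈ Finset.range (n + 1), ‖(⟨z.re, y⟩ : ℂ)‖ ^ (2 * k))) z.im
    = 4 * Gd n (z.re^2 + z.im^2) := by
  have habs : ∀ x y : ℝ, ∀ k : ℕ, ‖(⟨x,y⟩:ℂ)‖ ^ (2*k) = (x^2+y^2)^k := by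
    intro x y k
    rw [pow_mul, Complex.sq_norm]
    congr 1
    simp [Complex.normSq_mk]
    ring
  have h1 : (fun x : ℝ => Real.log
      (∑ k ∈ Finset.range (n + 1), ‖(⟨x, z.im⟩ : ℂ)‖ ^ (2 * k)))
      = fun x => Real.log (Sf n (x^2 + z.im^2)) := by
    funext x; congr 1
    exact Finset.sum_congr rfl fun k _ => habs x z.im k
  have h2 : (fun y : ℝ => Real.log
      (∑ k ∈ Finset.range (n + 1), ‖(⟨z.re, y⟩ : ℂ)‖ ^ (2 * k)))
      = fun y => Real.log (Sf n (y^2 + z.re^2)) := by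
    funext y; congr 1
    refine Finset.sum_congr rfl fun k _ => ?_
    rw [habs z.re y k]
    ring_nf
  rw [h1, h2, iteratedDeriv_two_log n _ (sq_nonneg _) z.re,
    iteratedDeriv_two_log n _ (sq_nonneg _) z.im]
  have hu : z.im^2 + z.re^2 = z.re^2 + z.im^2 := by ring
  rw [hu]
  have hS := ne_of_gt (Sf_pos n (show (0:ℝ) ≤ z.re^2+z.im^2 by positivity))
  unfold Gd
  field_simp
  ring

noncomputable def gfun (n : ℕ) (r : ℝ) : ℝ := Gfun n (r^2)
noncomputable def dgf (n : ℕ) (r : ℝ) : ℝ := 2*r*Gd n (r^2)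

lemma hasDerivAt_gfun (n : ℕ) (r : ℝ) : HasDerivAt (gfun n) (dgf n r) r := by
  have hsq : HasDerivAt (fun x : ℝ => x^2) (2*r) r := by simpa using hasDerivAt_pow 2 r
  have h : HasDerivAt ((Gfun n) ∘ (fun x : ℝ => x^2)) (Gd n (r^2) * (2*r)) r :=
    HasDerivAt.comp (h₂ := Gfun n) (h := fun x : ℝ => x^2) (x := r)
      (h₂' := Gd n (r^2)) (h' := 2*r)
      (hasDerivAt_G n (ne_of_gt (Sf_pos n (sq_nonneg r)))) hsq
  have he : dgf n r = Gd n (r^2) * (2*r) := by unfold dgf; ring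
  rw [he]
  exact h

lemma contSf_sq (n : ℕ) : Continuous fun r : ℝ => Sf n (r^2) := by
  unfold Sf
  exact continuous_finset_sum _ fun k _ => (continuous_pow 2).pow k

lemma contS1_sq (n : ℕ) : Continuous fun r : ℝ => S1 n (r^2) := by
  unfold S1
  exact continuous_finset_sum _ fun k _ => continuous_const.mul ((continuous_pow 2).pow (k-1))

lemma contS2_sq (n : ℕ) : Continuous fun r : ℝ => S2 n (r^2) := by
  unfold S2
  exact continuous_finset_sum _ fun k _ => continuous_const.mul ((continuous_pow 2).pow (k-2))

lemma contGd_sq (n : ℕ) : Continuous fun r : ℝ => Gd n (r^2) := by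
  unfold Gd
  refine Continuous.div ?_ ((contSf_sq n).pow 2)
    (fun r => pow_ne_zero 2 (ne_of_gt (Sf_pos n (sq_nonneg r))))
  exact (((contS1_sq n).add ((continuous_pow 2).mul (contS2_sq n))).mul (contSf_sq n)).sub
    ((continuous_pow 2).mul ((contS1_sq n).pow 2))

lemma contdgf (n : ℕ) : Continuous (dgf n) := by
  unfold dgf
  exact ((continuous_const.mul continuous_id).mul (contGd_sq n))

lemma dgf_nonneg (n : ℕ) {r : ℝ} (hr : 0 ≤ r) : 0 ≤ dgf n r :=
  mul_nonneg (by linarith) (Gd_nonneg n (sq_nonneg r))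

lemma integral_dgf (n : ℕ) (a b : ℝ) :
    ∫ r in a..b, dgf n r = gfun n b - gfun n a :=
  intervalIntegral.integral_eq_sub_of_hasDerivAt
    (fun x _ => hasDerivAt_gfun n x) ((contdgf n).intervalIntegrable a b)

lemma abs_integral_dgf_mul_le (n : ℕ) {ψ : ℝ → ℝ} (hψ : Continuous ψ)
    {a b C : ℝ} (hab : a ≤ b) (h0 : 0 ≤ a) (hC : ∀ r ∈ Set.Icc a b, |ψ r| ≤ C) :
    |∫ r in a..b, dgf n r * ψ r| ≤ C * (gfun n b - gfun n a) := by
  have hint : IntervalIntegrable (fun r => dgf n r * ψ r) volume a b :=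
    ((contdgf n).mul hψ).intervalIntegrable a b
  have hintC : IntervalIntegrable (fun r => C * dgf n r) volume a b :=
    (continuous_const.mul (contdgf n)).intervalIntegrable a b
  have hintC' : IntervalIntegrable (fun r => -(C * dgf n r)) volume a b := hintC.neg
  have hd : ∀ r ∈ Set.Icc a b, 0 ≤ dgf n r := fun r hr => dgf_nonneg n (le_trans h0 hr.1)
  have hup : ∫ r in a..b, dgf n r * ψ r ≤ ∫ r in a..b, C * dgf n r := by
    apply intervalIntegral.integral_mono_on hab hint hintC
    intro r hr
    have := hd r hr
    have h1 : ψ r ≤ C := (abs_le.mp (hC r hr)).2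
    nlinarith
  have hlo : ∫ r in a..b, -(C * dgf n r) ≤ ∫ r in a..b, dgf n r * ψ r := by
    apply intervalIntegral.integral_mono_on hab hintC' hint
    intro r hr
    have := hd r hr
    have h1 : -C ≤ ψ r := (abs_le.mp (hC r hr)).1
    nlinarith
  have hCint : ∫ r in a..b, C * dgf n r = C * (gfun n b - gfun n a) := by
    rw [intervalIntegral.integral_const_mul, integral_dgf]
  have hCint' : ∫ r in a..b, -(C * dgf n r) = -(C * (gfun n b - gfun n a)) := by
    rw [intervalIntegral.integral_neg, hCint]
  rw [abs_le]
  constructor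
  · rw [← hCint']; exact hlo
  · rw [← hCint]; exact hup


lemma gfun_zero (n : ℕ) : gfun n 0 = 0 := by
  simp [gfun, Gfun]

lemma gfun_nonneg (n : ℕ) {r : ℝ} (hr : 0 ≤ r) : 0 ≤ gfun n r :=
  Gfun_nonneg n (sq_nonneg r)

lemma gfun_le (n : ℕ) {r : ℝ} (hr : 0 ≤ r) : gfun n r ≤ n :=
  Gfun_le n (sq_nonneg r)

lemma gfun_lt_one_bound (n : ℕ) {r : ℝ} (h0 : 0 ≤ r) (h1 : r < 1) :
    gfun n r ≤ r^2 / (1 - r^2)^2 :=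
  Gfun_le_of_lt_one n (sq_nonneg r) (by nlinarith)

lemma gfun_gt_one_bound (n : ℕ) {r : ℝ} (h1 : 1 < r) :
    (n:ℝ) - gfun n r ≤ (r^2)⁻¹ / (1 - (r^2)⁻¹)^2 :=
  sub_Gfun_le n (by nlinarith)

lemma key1D (ψ : ℝ → ℝ) (hψ : Continuous ψ) (R : ℝ) (hR : 2 ≤ R) :
    Filter.Tendsto (fun n : ℕ => (n:ℝ)⁻¹ * ∫ r in (0:ℝ)..R, dgf n r * ψ r)
      atTop (nhds (ψ 1)) := by
  rw [Metric.tendsto_atTop]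
  intro ε hε
  -- uniform bound M
  obtain ⟨M0, hM0⟩ := (isCompact_Icc (a := (0:ℝ)) (b := R)).exists_bound_of_continuousOn
    hψ.continuousOn
  set M : ℝ := |M0| + 1 with hMdef
  have hMpos : 0 < M := by positivity
  have hM : ∀ r ∈ Set.Icc (0:ℝ) R, |ψ r| ≤ M := by
    intro r hr
    calc |ψ r| ≤ M0 := by simpa using hM0 r hr
      _ ≤ M := by rw [hMdef]; cases abs_cases M0 <;> linarith [abs_nonneg M0]
  -- δ from continuity at 1
  obtain ⟨δ0, hδ0, hδball⟩ := Metric.continuous_iff.mp hψ 1 (ε/4) (by positivity)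
  set δ : ℝ := min (δ0/2) (1/2) with hδdef
  have hδpos : 0 < δ := by positivity
  have hδhalf : δ ≤ 1/2 := min_le_right _ _
  set a : ℝ := 1 - δ with hadef
  set b : ℝ := 1 + δ with hbdef
  have ha0 : (0:ℝ) ≤ a := by simp only [hadef]; linarith
  have hab : a ≤ b := by simp only [hadef, hbdef]; linarith
  have hbR : b ≤ R := by simp only [hbdef]; linarith
  have ha1 : a < 1 := by simp only [hadef]; linarith
  have hb1 : 1 < b := by simp only [hbdef]; linarith
  have hsq_lt : a^2 < 1 := by nlinarith
  set C1 : ℝ := a^2 / (1 - a^2)^2 with hC1def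
  set C2 : ℝ := (b^2)⁻¹ / (1 - (b^2)⁻¹)^2 with hC2def
  have hC1nn : 0 ≤ C1 := by
    apply div_nonneg (sq_nonneg a) (sq_nonneg _)
  have hC2nn : 0 ≤ C2 := by
    have hb2 : 1 < b^2 := by nlinarith
    have : (b^2)⁻¹ ≤ 1 := by
      rw [inv_le_one_iff₀]; right; linarith
    apply div_nonneg (by positivity) (sq_nonneg _)
  set K : ℝ := 2 * M * (C1 + C2) with hKdef
  have hKnn : 0 ≤ K := by positivity
  -- per-n estimate
  have main : ∀ n : ℕ, |(∫ r in (0:ℝ)..R, dgf n r * ψ r) - (n:ℝ) * ψ 1| ≤ K + (ε/4) * n := by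
    intro n
    have hint : ∀ u v : ℝ, IntervalIntegrable (fun r => dgf n r * ψ r) volume u v :=
      fun u v => ((contdgf n).mul hψ).intervalIntegrable u v
    have hsplit : (∫ r in (0:ℝ)..R, dgf n r * ψ r)
        = (∫ r in (0:ℝ)..a, dgf n r * ψ r) + (∫ r in a..b, dgf n r * ψ r)
          + (∫ r in b..R, dgf n r * ψ r) := by
      rw [intervalIntegral.integral_add_adjacent_intervals (hint 0 a) (hint a b),
        intervalIntegral.integral_add_adjacent_intervals
          (IntervalIntegrable.trans (hint 0 a) (hint a b)) (hint b R)]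
    have hMsub : ∀ u v : ℝ, 0 ≤ u → v ≤ R → ∀ r ∈ Set.Icc u v, |ψ r| ≤ M := by
      intro u v hu hv r hr
      exact hM r ⟨le_trans hu hr.1, le_trans hr.2 hv⟩
    have h1 : |∫ r in (0:ℝ)..a, dgf n r * ψ r| ≤ M * C1 := by
      have := abs_integral_dgf_mul_le n hψ ha0 le_rfl
        (hMsub 0 a le_rfl (by linarith))
      have hga : gfun n a ≤ C1 := gfun_lt_one_bound n ha0 ha1
      rw [gfun_zero n] at this
      calc |∫ r in (0:ℝ)..a, dgf n r * ψ r| ≤ M * (gfun n a - 0) := this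
        _ ≤ M * C1 := by
            apply mul_le_mul_of_nonneg_left _ hMpos.le
            linarith
    have h3 : |∫ r in b..R, dgf n r * ψ r| ≤ M * C2 := by
      have := abs_integral_dgf_mul_le n hψ hbR (by linarith : (0:ℝ) ≤ b)
        (hMsub b R (by linarith) le_rfl)
      have hgb : (n:ℝ) - gfun n b ≤ C2 := gfun_gt_one_bound n hb1
      have hgR : gfun n R ≤ n := gfun_le n (by linarith)
      calc |∫ r in b..R, dgf n r * ψ r| ≤ M * (gfun n R - gfun n b) := this
        _ ≤ M * C2 := by
            apply mul_le_mul_of_nonneg_left _ hMpos.le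
            linarith
    -- middle estimate
    have hψ1 : ∀ r ∈ Set.Icc a b, |ψ r - ψ 1| ≤ ε/4 := by
      intro r hr
      have : dist r 1 < δ0 := by
        rw [Real.dist_eq]
        have h1 : |r - 1| ≤ δ := by
          rw [abs_le]
          have := hr.1
          have := hr.2
          rw [hadef] at *
          exact ⟨by linarith, by linarith⟩
        have : δ < δ0 := lt_of_le_of_lt (min_le_left _ _) (by linarith)
        linarith
      have := hδball r this
      rw [Real.dist_eq] at this
      exact this.le
    have hmid : |(∫ r in a..b, dgf n r * ψ r) - ψ 1 * (gfun n b - gfun n a)|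
        ≤ (ε/4) * (gfun n b - gfun n a) := by
      have heq : (∫ r in a..b, dgf n r * ψ r) - ψ 1 * (gfun n b - gfun n a)
          = ∫ r in a..b, dgf n r * (ψ r - ψ 1) := by
        have : (fun r => dgf n r * (ψ r - ψ 1))
            = fun r => dgf n r * ψ r - ψ 1 * dgf n r := by
          funext r; ring
        rw [this, intervalIntegral.integral_sub (hint a b)
          ((continuous_const.fun_mul (contdgf n)).intervalIntegrable a b),
          intervalIntegral.integral_const_mul, integral_dgf]
      rw [heq]
      exact abs_integral_dgf_mul_le n (hψ.sub continuous_const) hab ha0 hψ1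
    have hΔnn : 0 ≤ gfun n b - gfun n a := by
      rw [← integral_dgf n a b]
      exact intervalIntegral.integral_nonneg hab
        (fun r hr => dgf_nonneg n (le_trans ha0 hr.1))
    have hΔle : gfun n b - gfun n a ≤ n := by
      have h1 := gfun_le n (show (0:ℝ) ≤ b by linarith)
      have h2 := gfun_nonneg n ha0
      linarith
    have htail : |ψ 1 * (gfun n b - gfun n a) - (n:ℝ) * ψ 1| ≤ M * (C1 + C2) := by
      have hψ1M : |ψ 1| ≤ M := hM 1 ⟨by norm_num, by linarith⟩
      have hgb : (n:ℝ) - gfun n b ≤ C2 := gfun_gt_one_bound n hb1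
      have hga : gfun n a ≤ C1 := gfun_lt_one_bound n ha0 ha1
      have hga0 : 0 ≤ gfun n a := gfun_nonneg n ha0
      have hgbn : gfun n b ≤ n := gfun_le n (by linarith)
      have : |ψ 1 * (gfun n b - gfun n a) - (n:ℝ) * ψ 1|
          = |ψ 1 * ((n:ℝ) - (gfun n b - gfun n a))| := by
        rw [← abs_neg]; congr 1; ring
      rw [this, abs_mul]
      have habs2 : |(n:ℝ) - (gfun n b - gfun n a)| ≤ C1 + C2 := by
        rw [abs_of_nonneg (by linarith)]
        linarith
      exact mul_le_mul hψ1M habs2 (abs_nonneg _) hMpos.le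
    have hmid2 : |(∫ r in a..b, dgf n r * ψ r) - (n:ℝ) * ψ 1|
        ≤ (ε/4) * n + M * (C1 + C2) := by
      have h4 : (ε/4) * (gfun n b - gfun n a) ≤ (ε/4) * n := by
        apply mul_le_mul_of_nonneg_left hΔle (by positivity)
      calc |(∫ r in a..b, dgf n r * ψ r) - (n:ℝ) * ψ 1|
          ≤ |(∫ r in a..b, dgf n r * ψ r) - ψ 1 * (gfun n b - gfun n a)|
            + |ψ 1 * (gfun n b - gfun n a) - (n:ℝ) * ψ 1| := abs_sub_le _ _ _
        _ ≤ (ε/4) * (gfun n b - gfun n a) + M * (C1 + C2) := add_le_add hmid htail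
        _ ≤ (ε/4) * n + M * (C1 + C2) := by linarith
    have habs3 : |(∫ r in (0:ℝ)..R, dgf n r * ψ r) - (n:ℝ) * ψ 1|
        ≤ |(∫ r in (0:ℝ)..a, dgf n r * ψ r)|
          + |(∫ r in a..b, dgf n r * ψ r) - (n:ℝ) * ψ 1|
          + |∫ r in b..R, dgf n r * ψ r| := by
      have he : (∫ r in (0:ℝ)..R, dgf n r * ψ r) - (n:ℝ) * ψ 1
          = (∫ r in (0:ℝ)..a, dgf n r * ψ r)
            + ((∫ r in a..b, dgf n r * ψ r) - (n:ℝ) * ψ 1)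
            + (∫ r in b..R, dgf n r * ψ r) := by rw [hsplit]; ring
      rw [he]
      have t1 := abs_add_le ((∫ r in (0:ℝ)..a, dgf n r * ψ r)
          + ((∫ r in a..b, dgf n r * ψ r) - (n:ℝ) * ψ 1)) (∫ r in b..R, dgf n r * ψ r)
      have t2 := abs_add_le (∫ r in (0:ℝ)..a, dgf n r * ψ r)
          ((∫ r in a..b, dgf n r * ψ r) - (n:ℝ) * ψ 1)
      linarith
    have : M * C1 + ((ε/4) * n + M * (C1 + C2)) + M * C2 = K + (ε/4) * n := by
      rw [hKdef]; ring
    linarith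
  -- conclude
  obtain ⟨N0, hN0⟩ := exists_nat_gt (4 * K / ε)
  refine ⟨max N0 1, fun n hn => ?_⟩
  have hn1 : 1 ≤ n := le_trans (le_max_right N0 1) hn
  have hnpos : (0:ℝ) < n := by exact_mod_cast hn1
  have hnN0 : (N0:ℝ) ≤ n := by exact_mod_cast le_trans (le_max_left N0 1) hn
  have hKn : K / n < ε / 2 := by
    have h1 : 4 * K / ε < n := lt_of_lt_of_le hN0 hnN0
    rw [div_lt_iff₀ hnpos]
    rw [div_lt_iff₀ hε] at h1
    nlinarith
  rw [Real.dist_eq]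
  have := main n
  have heq : (n:ℝ)⁻¹ * (∫ r in (0:ℝ)..R, dgf n r * ψ r) - ψ 1
      = (n:ℝ)⁻¹ * ((∫ r in (0:ℝ)..R, dgf n r * ψ r) - (n:ℝ) * ψ 1) := by
    field_simp
  rw [heq, abs_mul, abs_of_nonneg (inv_nonneg.mpr hnpos.le)]
  calc (n:ℝ)⁻¹ * |(∫ r in (0:ℝ)..R, dgf n r * ψ r) - (n:ℝ) * ψ 1|
      ≤ (n:ℝ)⁻¹ * (K + (ε/4) * n) := by
        apply mul_le_mul_of_nonneg_left this (inv_nonneg.mpr hnpos.le)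
    _ = K / n + (ε/4) * ((n:ℝ)⁻¹ * n) := by rw [div_eq_inv_mul]; ring
    _ = K / n + ε/4 := by rw [inv_mul_cancel₀ (ne_of_gt hnpos)]; ring
    _ < ε/2 + ε/4 := by linarith
    _ < ε := by linarith

/-- For every compactly supported continuous `φ : ℂ → ℝ`, the limit as `n → ∞` of
`(1/(4πn)) · ∫_ℂ (Δ H_n)(z) · φ(z) dA(z)` equals `(1/(2π)) · ∫_0^{2π} φ(e^{iθ}) dθ`,
where `H_n(z) = log (∑_{k=0}^n |z|^{2k})` and `Δ` is the sum of the two second partial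
derivatives on `ℂ ≅ ℝ²`. -/
theorem tendsto_integral_laplacian_log_sum_abs_pow
    (φ : ℂ → ℝ) (hφc : Continuous φ) (hφs : HasCompactSupport φ) :
    Tendsto
      (fun n : ℕ =>
        (1 / (4 * Real.pi * (n : ℝ))) *
          ∫ z : ℂ,
            (iteratedDeriv 2
                (fun x : ℝ => Real.log
                  (∑ k ∈ Finset.range (n + 1), ‖(⟨x, z.im⟩ : ℂ)‖ ^ (2 * k)))
                z.re +
             iteratedDeriv 2
                (fun y : ℝ => Real.log
                  (∑ k ∈ Finset.range (n + 1), ‖(⟨z.re, y⟩ : ℂ)‖ ^ (2 * k)))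
                z.im) * φ z)
      atTop
      (nhds ((1 / (2 * Real.pi)) *
        ∫ θ in (0 : ℝ)..(2 * Real.pi), φ (Complex.exp (θ * Complex.I)))) := by
  -- choose radius R
  obtain ⟨R0, hR0⟩ := hφs.isCompact.isBounded.subset_closedBall 0
  set R : ℝ := max R0 0 + 2 with hRdef
  have hR2 : 2 ≤ R := by
    have := le_max_right R0 0
    simp only [hRdef]; linarith
  have hRpos : 0 < R := by linarith
  have hφzero : ∀ z : ℂ, R ≤ ‖z‖ → φ z = 0 := by
    intro z hz
    apply image_eq_zero_of_notMem_tsupport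
    intro hmem
    have := hR0 hmem
    rw [Metric.mem_closedBall] at this
    rw [Complex.dist_eq, sub_zero] at this
    have h1 := le_max_left R0 0
    simp only [hRdef] at hz
    linarith
  -- the angular average
  set ψ : ℝ → ℝ := fun r => ∫ θ in (-π)..π, φ (Complex.polarCoord.symm (r, θ)) with hψdef
  have hsymm_cont : Continuous fun p : ℝ × ℝ => Complex.polarCoord.symm p := by
    have he : (fun p : ℝ × ℝ => Complex.polarCoord.symm p)
        = fun p => (p.1 : ℂ) * (Real.cos p.2 + Real.sin p.2 * Complex.I) :=
      funext Complex.polarCoord_symm_apply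
    rw [he]
    continuity
  have hψcont : Continuous ψ := by
    apply intervalIntegral.continuous_parametric_intervalIntegral_of_continuous'
      (f := fun r θ => φ (Complex.polarCoord.symm (r, θ))) (μ := volume)
    exact hφc.comp hsymm_cont
  have habs_symm : ∀ r θ : ℝ, 0 ≤ r → ‖Complex.polarCoord.symm (r, θ)‖ = r := by
    intro r θ hr
    rw [Complex.norm_polarCoord_symm]
    exact abs_of_nonneg hr
  -- square norm identity
  have hsq : ∀ p : ℝ × ℝ, (Complex.polarCoord.symm p).re^2 + (Complex.polarCoord.symm p).im^2
      = p.1^2 := by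
    intro p
    rw [Complex.polarCoord_symm_apply]
    simp [Complex.mul_re, Complex.mul_im, Complex.cos_ofReal_re, Complex.sin_ofReal_re]
    ring_nf
    nlinarith [Real.sin_sq_add_cos_sq p.2]
  -- per-n computation of the integral
  have hint_eq : ∀ n : ℕ,
      (∫ z : ℂ,
        (iteratedDeriv 2 (fun x : ℝ => Real.log
          (∑ k ∈ Finset.range (n + 1), ‖(⟨x, z.im⟩ : ℂ)‖ ^ (2 * k))) z.re +
         iteratedDeriv 2 (fun y : ℝ => Real.log
          (∑ k ∈ Finset.range (n + 1), ‖(⟨z.re, y⟩ : ℂ)‖ ^ (2 * k))) z.im) * φ z)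
      = 2 * ∫ r in (0:ℝ)..R, dgf n r * ψ r := by
    intro n
    -- rewrite integrand via laplacian_eq
    have hstep1 : (fun z : ℂ =>
        (iteratedDeriv 2 (fun x : ℝ => Real.log
          (∑ k ∈ Finset.range (n + 1), ‖(⟨x, z.im⟩ : ℂ)‖ ^ (2 * k))) z.re +
         iteratedDeriv 2 (fun y : ℝ => Real.log
          (∑ k ∈ Finset.range (n + 1), ‖(⟨z.re, y⟩ : ℂ)‖ ^ (2 * k))) z.im) * φ z)
        = fun z : ℂ => (4 * Gd n (z.re^2 + z.im^2)) * φ z := by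
      funext z
      rw [laplacian_eq n z]
    rw [hstep1]
    -- polar coordinates
    have hpolar := Complex.integral_comp_polarCoord_symm
      (fun z : ℂ => (4 * Gd n (z.re^2 + z.im^2)) * φ z)
    rw [← hpolar]
    set h : ℝ × ℝ → ℝ :=
      fun p => (p.1 * (4 * Gd n (p.1^2))) * φ (Complex.polarCoord.symm p) with hhdef
    have hfun_eq : (fun p : ℝ × ℝ => p.1 •
        ((4 * Gd n ((Complex.polarCoord.symm p).re^2 + (Complex.polarCoord.symm p).im^2))
          * φ (Complex.polarCoord.symm p))) = h := by
      funext p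
      rw [hhdef]
      simp only [smul_eq_mul, hsq p]
      ring
    rw [show polarCoord.target = Set.Ioi (0:ℝ) ×ˢ Set.Ioo (-π) π from rfl, hfun_eq]
    -- continuity and support of h
    have hGd_fst : Continuous fun p : ℝ × ℝ => Gd n (p.1^2) :=
      (contGd_sq n).comp continuous_fst
    have hcont : Continuous h := by
      rw [hhdef]
      exact (continuous_fst.mul (continuous_const.mul hGd_fst)).mul (hφc.comp hsymm_cont)
    have hzero : ∀ p : ℝ × ℝ, R ≤ p.1 → h p = 0 := by
      intro p hp
      have habs : ‖Complex.polarCoord.symm p‖ = |p.1| :=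
        Complex.norm_polarCoord_symm p
      have : φ (Complex.polarCoord.symm p) = 0 := by
        apply hφzero
        rw [habs, abs_of_nonneg (by linarith)]
        exact hp
      simp only [hhdef]
      rw [this, mul_zero]
    -- split the radial set
    have hsplitset : Set.Ioi (0:ℝ) ×ˢ Set.Ioo (-π) π
        = (Set.Ioc (0:ℝ) R ×ˢ Set.Ioo (-π) π) ∪ (Set.Ioi R ×ˢ Set.Ioo (-π) π) := by
      rw [← Set.union_prod, Set.Ioc_union_Ioi_eq_Ioi hRpos.le]
    have hint1 : IntegrableOn h (Set.Ioc (0:ℝ) R ×ˢ Set.Ioo (-π) π) volume := by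
      apply IntegrableOn.mono_set
        (hcont.continuousOn.integrableOn_compact (isCompact_Icc.prod isCompact_Icc))
      exact Set.prod_mono Set.Ioc_subset_Icc_self Set.Ioo_subset_Icc_self
    have hmeas2 : MeasurableSet (Set.Ioi R ×ˢ Set.Ioo (-π) π : Set (ℝ × ℝ)) :=
      measurableSet_Ioi.prod measurableSet_Ioo
    have hzero2 : ∀ p ∈ (Set.Ioi R ×ˢ Set.Ioo (-π) π : Set (ℝ × ℝ)), h p = 0 :=
      fun p hp => hzero p (le_of_lt hp.1)
    have hint2 : IntegrableOn h (Set.Ioi R ×ˢ Set.Ioo (-π) π) volume := by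
      rw [integrableOn_congr_fun hzero2 hmeas2]
      exact integrableOn_zero
    have hdisj : Disjoint (Set.Ioc (0:ℝ) R ×ˢ Set.Ioo (-π) π)
        (Set.Ioi R ×ˢ Set.Ioo (-π) π) := by
      rw [Set.disjoint_prod]
      left
      exact Set.Ioc_disjoint_Ioi le_rfl
    rw [hsplitset, setIntegral_union hdisj hmeas2 hint1 hint2,
      setIntegral_eq_zero_of_forall_eq_zero hzero2, add_zero]
    -- Fubini
    rw [MeasureTheory.Measure.volume_eq_prod ℝ ℝ] at hint1 ⊢
    rw [MeasureTheory.setIntegral_prod h hint1]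
    -- inner integral
    have hinner : ∀ r : ℝ, (∫ θ in Set.Ioo (-π) π, h (r, θ)) = 2 * (dgf n r * ψ r) := by
      intro r
      have : (fun θ => h (r, θ))
          = fun θ => (r * (4 * Gd n (r^2))) * φ (Complex.polarCoord.symm (r, θ)) := by
        funext θ; rw [hhdef]
      rw [this, MeasureTheory.integral_const_mul]
      have hψr : (∫ θ in Set.Ioo (-π) π, φ (Complex.polarCoord.symm (r, θ))) = ψ r := by
        rw [hψdef]
        simp only
        rw [intervalIntegral.integral_of_le (by linarith [Real.pi_pos] : -π ≤ π),
          MeasureTheory.integral_Ioc_eq_integral_Ioo]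
      rw [hψr, dgf]
      ring
    rw [show (fun r : ℝ => ∫ θ in Set.Ioo (-π) π, h (r, θ))
        = fun r : ℝ => 2 * (dgf n r * ψ r) from funext hinner]
    rw [← intervalIntegral.integral_of_le hRpos.le, intervalIntegral.integral_const_mul]
  -- ψ 1 is the target integral
  have hψ1 : ψ 1 = ∫ θ in (0:ℝ)..(2*π), φ (Complex.exp (θ * Complex.I)) := by
    have hfun : ∀ θ : ℝ, Complex.polarCoord.symm ((1:ℝ), θ) = Complex.exp (θ * Complex.I) := by
      intro θ
      rw [Complex.polarCoord_symm_apply, Complex.exp_mul_I]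
      push_cast
      ring
    have hper : Function.Periodic (fun θ : ℝ => φ (Complex.exp (θ * Complex.I))) (2*π) := by
      intro θ
      simp only
      congr 1
      have h2 : ((θ + 2*π : ℝ) : ℂ) = (θ:ℂ) + 2*(π:ℂ) := by push_cast; ring
      rw [h2]
      exact Complex.exp_mul_I_periodic (θ:ℂ)
    have h1 : ψ 1 = ∫ θ in (-π)..π, φ (Complex.exp (θ * Complex.I)) := by
      rw [hψdef]
      simp only
      congr 1
      funext θ
      rw [hfun θ]
    rw [h1]
    have h3 := hper.intervalIntegral_add_eq (-π) 0
    have h4 : -π + 2*π = π := by ring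
    rw [h4] at h3
    rw [h3, zero_add]
  -- conclude
  have hlim := (key1D ψ hψcont R hR2).const_mul (1/(2*π))
  rw [hψ1] at hlim
  convert hlim using 2 with n
  rw [hint_eq n]
  rcases Nat.eq_zero_or_pos n with h0 | hpos
  · subst h0
    norm_num
  · have hn : (n:ℝ) ≠ 0 := Nat.cast_ne_zero.mpr (Nat.pos_iff_ne_zero.mp hpos)
    have hπ : (π:ℝ) ≠ 0 := Real.pi_ne_zero
    field_simp
    ring
end

section
/- For every real r₀ > 0, the limit as n → ∞ of (1/n) · g_n'(r₀) equals Ξ(r₀), where g_n' is the derivative of g_n(r) = log(∑_{k=0}^n r^{2k}) and Ξ(x) = 2/x if x > 1, Ξ(x) = 1 if x = 1, and Ξ(x) = 0 if x < 1. -/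
open Filter Finset Real

lemma one_le_sum_pow (n : ℕ) (x : ℝ) (hx : 0 ≤ x) :
    1 ≤ ∑ k ∈ Finset.range (n + 1), x ^ k := by
  calc (1:ℝ) = ∑ k ∈ Finset.range 1, x ^ k := by simp
  _ ≤ _ := Finset.sum_le_sum_of_subset_of_nonneg
      (Finset.range_subset_range.2 (by omega)) (fun k _ _ => by positivity)

lemma hasDerivAt_B (n : ℕ) (r : ℝ) (hr : 0 < r) :
    HasDerivAt (fun r : ℝ => ∑ k ∈ Finset.range (n+1), r ^ (2*k))
      ((2 / r) * ∑ k ∈ Finset.range (n+1), (k : ℝ) * (r^2) ^ k) r := by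
  rw [Finset.mul_sum]
  apply HasDerivAt.fun_sum
  intro k _
  have h := hasDerivAt_pow (2*k) r
  refine h.congr_deriv (Eq.symm ?_)
  rcases Nat.eq_zero_or_pos k with h0 | h1
  · simp [h0]
  · have hx : (r^2)^k = r^(2*k-1) * r := by
      rw [← pow_mul, ← pow_succ]
      congr 1; omega
    rw [hx]
    field_simp
    push_cast
    ring

lemma deriv_log_B (n : ℕ) (r : ℝ) (hr : 0 < r) :
    deriv (fun r : ℝ => Real.log (∑ k ∈ Finset.range (n+1), r ^ (2*k))) r
      = ((2 / r) * ∑ k ∈ Finset.range (n+1), (k : ℝ) * (r^2) ^ k) /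
        (∑ k ∈ Finset.range (n+1), r ^ (2*k)) := by
  have hB := hasDerivAt_B n r hr
  have hpos : (0:ℝ) < ∑ k ∈ Finset.range (n+1), r ^ (2*k) := by
    have := one_le_sum_pow n (r^2) (by positivity)
    calc (0:ℝ) < 1 := one_pos
    _ ≤ ∑ k ∈ Finset.range (n+1), (r^2) ^ k := this
    _ = _ := by apply Finset.sum_congr rfl; intro k _; rw [← pow_mul]
  have hlog := (Real.hasDerivAt_log (ne_of_gt hpos)).comp r hB
  have := hlog.deriv
  rw [show (Real.log ∘ fun r : ℝ => ∑ k ∈ Finset.range (n+1), r ^ (2*k))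
      = fun r : ℝ => Real.log (∑ k ∈ Finset.range (n+1), r ^ (2*k)) from rfl] at this
  rw [this]
  ring

/-- For every real `r₀ > 0`, the limit as `n → ∞` of `(1/n) · g_n'(r₀)` equals `Ξ(r₀)`,
where `g_n(r) = log (∑_{k=0}^n r^{2k})` and `Ξ(x) = 2/x` for `x > 1`, `Ξ(1) = 1`, and
`Ξ(x) = 0` for `x < 1`. -/
theorem tendsto_one_div_n_deriv_log_sum_pow (r₀ : ℝ) (hr₀ : 0 < r₀) :
    Tendsto
      (fun n : ℕ =>
        (1 / (n : ℝ)) *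
          deriv (fun r : ℝ => Real.log (∑ k ∈ Finset.range (n + 1), r ^ (2 * k))) r₀)
      atTop
      (nhds (if 1 < r₀ then 2 / r₀ else if r₀ = 1 then 1 else 0)) := by
  set x := r₀ ^ 2 with hxdef
  have hx0 : 0 ≤ x := by positivity
  set P : ℕ → ℝ := fun n => ∑ k ∈ Finset.range (n+1), (k : ℝ) * x ^ k with hPdef
  set D : ℕ → ℝ := fun n => ∑ k ∈ Finset.range (n+1), x ^ k with hDdef
  have hD1 : ∀ n, 1 ≤ D n := fun n => one_le_sum_pow n x hx0
  have hP0 : ∀ n, 0 ≤ P n := by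
    intro n; apply Finset.sum_nonneg; intro k _; positivity
  have key : ∀ n : ℕ,
      (1 / (n:ℝ)) * deriv (fun r : ℝ => Real.log (∑ k ∈ Finset.range (n+1), r ^ (2*k))) r₀
        = (2 / r₀) * (P n / ((n:ℝ) * D n)) := by
    intro n
    rw [deriv_log_B n r₀ hr₀,
      show (∑ k ∈ Finset.range (n+1), r₀ ^ (2*k)) = D n from
        Finset.sum_congr rfl fun k _ => by rw [pow_mul]]
    ring
  refine Tendsto.congr (fun n => (key n).symm) ?_
  rcases lt_trichotomy r₀ 1 with h | h | h
  · -- r₀ < 1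
    rw [if_neg (by linarith), if_neg (by linarith)]
    have hx1 : x < 1 := by nlinarith
    have hsum : Summable (fun k : ℕ => (k:ℝ) * x ^ k) := by
      have := summable_pow_mul_geometric_of_norm_lt_one (R := ℝ) 1
        (r := x) (by rw [Real.norm_eq_abs, abs_of_nonneg hx0]; exact hx1)
      simpa using this
    set C := ∑' k : ℕ, (k:ℝ) * x ^ k with hC
    have hPC : ∀ n, P n ≤ C := fun n =>
      Summable.sum_le_tsum (Finset.range (n+1)) (fun k _ => by positivity) hsum
    have hC0 : 0 ≤ C := tsum_nonneg (fun k => by positivity)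
    refine squeeze_zero' (g := fun n : ℕ => (2 / r₀ * C) / (n:ℝ)) ?_ ?_
      (tendsto_const_div_atTop_nhds_zero_nat _)
    · filter_upwards with n
      have := hP0 n; have := hD1 n
      positivity
    · filter_upwards [eventually_ge_atTop 1] with n hn
      have hn' : (0:ℝ) < n := by exact_mod_cast hn
      have h1 : P n / ((n:ℝ) * D n) ≤ C / (n:ℝ) := by
        apply div_le_div₀ hC0 (hPC n) hn'
        nlinarith [hD1 n]
      calc (2 / r₀) * (P n / ((n:ℝ) * D n)) ≤ (2 / r₀) * (C / (n:ℝ)) := by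
            apply mul_le_mul_of_nonneg_left h1 (by positivity)
      _ = (2 / r₀ * C) / (n:ℝ) := by ring
  · -- r₀ = 1
    subst h
    rw [if_neg (lt_irrefl 1), if_pos rfl]
    apply tendsto_const_nhds.congr'
    filter_upwards [eventually_ge_atTop 1] with n hn
    have hn' : (0:ℝ) < n := by exact_mod_cast hn
    have hsum : P n = (n:ℝ) * ((n:ℝ)+1) / 2 := by
      have := Finset.sum_range_id_mul_two (n+1)
      rw [Nat.add_sub_cancel] at this
      have h2 : P n = ∑ k ∈ Finset.range (n+1), (k:ℝ) := by
        apply Finset.sum_congr rfl; intro k _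
        simp [hxdef]
      rw [h2]
      have h4 := congrArg (fun m : ℕ => (m:ℝ)) this
      push_cast at h4
      linarith
    have hDn : D n = (n:ℝ) + 1 := by
      simp [hDdef, hxdef]
    rw [hsum, hDn]
    field_simp
  · -- 1 < r₀
    rw [if_pos h]
    have hx1 : 1 < x := by nlinarith
    have hxp : 0 < x := by linarith
    set y := x⁻¹ with hydef
    have hy0 : 0 < y := by positivity
    have hy1 : y < 1 := by
      rw [hydef, inv_lt_one_iff₀]; right; exact hx1
    have hsum : Summable (fun k : ℕ => (k:ℝ) * y ^ k) := by
      have := summable_pow_mul_geometric_of_norm_lt_one (R := ℝ) 1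
        (r := y) (by rw [Real.norm_eq_abs, abs_of_nonneg hy0.le]; exact hy1)
      simpa using this
    set C := ∑' k : ℕ, (k:ℝ) * y ^ k with hC
    have hC0 : 0 ≤ C := tsum_nonneg (fun k => by positivity)
    have hboth : ∀ n : ℕ, 1 ≤ n →
        1 - C / (n:ℝ) ≤ P n / ((n:ℝ) * D n) ∧ P n / ((n:ℝ) * D n) ≤ 1 := by
      intro n hn
      have hn' : (0:ℝ) < n := by exact_mod_cast hn
      have hDpos : (0:ℝ) < D n := lt_of_lt_of_le one_pos (hD1 n)
      set Q : ℝ := ∑ k ∈ Finset.range (n+1), (k:ℝ) * x ^ (n - k) with hQdef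
      have key1 : (n:ℝ) * D n - P n = Q := by
        have hrefl := Finset.sum_range_reflect (fun j => (j:ℝ) * x ^ (n - j)) (n+1)
        simp only [Nat.add_sub_cancel] at hrefl
        rw [hDdef, hPdef, Finset.mul_sum, ← Finset.sum_sub_distrib, hQdef, ← hrefl]
        apply Finset.sum_congr rfl
        intro j hj
        have hj' : j ≤ n := Nat.lt_succ_iff.mp (Finset.mem_range.mp hj)
        rw [Nat.sub_sub_self hj', Nat.cast_sub hj']
        ring
      have key2 : Q = x ^ n * ∑ k ∈ Finset.range (n+1), (k:ℝ) * y ^ k := by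
        rw [hQdef, Finset.mul_sum]
        apply Finset.sum_congr rfl
        intro k hk
        have hk' : k ≤ n := Nat.lt_succ_iff.mp (Finset.mem_range.mp hk)
        have h1 : x ^ (n - k) * x ^ k = x ^ n := by
          rw [← pow_add]; congr 1; omega
        have hyk : y ^ k = (x ^ k)⁻¹ := by rw [hydef, inv_pow]
        rw [hyk]
        have hxk : (x:ℝ) ^ k ≠ 0 := by positivity
        field_simp
        nlinarith [h1]
      have hQ0 : 0 ≤ Q := by
        rw [hQdef]; apply Finset.sum_nonneg; intro k _; positivity
      have hxn : x ^ n ≤ D n := by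
        rw [hDdef]
        exact Finset.single_le_sum (f := fun k => x ^ k)
          (fun k _ => by positivity) (Finset.self_mem_range_succ n)
      have hQC : Q ≤ D n * C := by
        rw [key2]
        calc x ^ n * ∑ k ∈ Finset.range (n+1), (k:ℝ) * y ^ k ≤ x ^ n * C := by
              apply mul_le_mul_of_nonneg_left
                (Summable.sum_le_tsum _ (fun k _ => by positivity) hsum) (by positivity)
        _ ≤ D n * C := mul_le_mul_of_nonneg_right hxn hC0
      have hPn : P n = (n:ℝ) * D n - Q := by linarith
      constructor
      · have hne : (n:ℝ) * D n ≠ 0 := by positivity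
        rw [hPn, sub_div, div_self hne]
        have hq : Q / ((n:ℝ) * D n) ≤ C / (n:ℝ) := by
          rw [div_le_div_iff₀ (by positivity) hn']
          nlinarith
        linarith
      · rw [div_le_one (by positivity)]
        nlinarith
    have hmain : Tendsto (fun n : ℕ => P n / ((n:ℝ) * D n)) atTop (nhds 1) := by
      apply tendsto_of_tendsto_of_tendsto_of_le_of_le'
        (g := fun n : ℕ => 1 - C / (n:ℝ)) (h := fun _ : ℕ => (1:ℝ))
      · have := (tendsto_const_div_atTop_nhds_zero_nat C)
        simpa using (tendsto_const_nhds (x := (1:ℝ)) (f := atTop)).sub this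
      · exact tendsto_const_nhds
      · filter_upwards [eventually_ge_atTop 1] with n hn using (hboth n hn).1
      · filter_upwards [eventually_ge_atTop 1] with n hn using (hboth n hn).2
    have h5 := hmain.const_mul (2 / r₀)
    rw [mul_one] at h5
    exact h5
end
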